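/- arXiv:2407.14989 — 8 statements merged into one kernel-verified Lean document; each statement's English description precedes it below -/
import Mathlib

section
/- Let d ∈ ℕ, Δt > 0, and L₀, L₁ > 0. Let f : ℝ^d → ℝ^d be continuously differentiable with sup_x ‖f(x)‖ ≤ L₀ and sup_x ‖Df(x)‖_op ≤ L₁. Then the increment map ι := Υ(f, Δt, ·) satisfies sup_{x∈ℝ^d} ‖ι(x)‖ ≤ Δt·L₀ and sup_{x∈ℝ^d} ‖Dι(x)‖_op ≤ exp(L₁·Δt) − 1. -/
open Set Real Asymptotics Metric

namespace Stmt0Aux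
variable {E : Type*} [NormedAddCommGroup E] [NormedSpace ℝ E]

theorem gron_aux {u u' : ℝ → E} {τ K ε δ : ℝ} (hK : 0 < K) (hτ : 0 ≤ τ)
    (hc : ContinuousOn u (Icc 0 τ))
    (hd : ∀ t ∈ Ico 0 τ, HasDerivWithinAt u (u' t) (Ici t) t)
    (h0 : ‖u 0‖ ≤ δ)
    (hb : ∀ t ∈ Ico 0 τ, ‖u' t‖ ≤ K * ‖u t‖ + ε) :
    ‖u τ‖ ≤ δ * exp (K * τ) + ε / K * (exp (K * τ) - 1) := by
  have h := norm_le_gronwallBound_of_norm_deriv_right_le hc hd h0 hb τ (right_mem_Icc.2 hτ)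
  rwa [gronwallBound_of_K_ne_0 hK.ne', sub_zero] at h

theorem variational_exists [CompleteSpace E] {τ L₁ : ℝ} (hτ : 0 < τ) (hL₁ : 0 < L₁)
    (hsmall : L₁ * τ ≤ 1 / 2) (A : ℝ → E →L[ℝ] E) (hAc : Continuous A)
    (hAb : ∀ t, ‖A t‖ ≤ L₁) (ξ : E) :
    ∃ w : ℝ → E, w 0 = ξ ∧ ∀ t ∈ Icc 0 τ, HasDerivWithinAt w (A t (w t)) (Icc 0 τ) t := by
  have hpl : IsPicardLindelof (fun t z => A t z) (tmin := 0) (tmax := τ) ⟨0, ⟨le_refl 0, hτ.le⟩⟩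
      ξ ⟨‖ξ‖ + 1, by positivity⟩ 0 ⟨L₁ * (2 * ‖ξ‖ + 2), by positivity⟩ L₁.toNNReal := by
    constructor
    · intro t _
      refine ((A t).lipschitz.weaken ?_).lipschitzOnWith
      rw [← NNReal.coe_le_coe, coe_nnnorm, Real.coe_toNNReal _ hL₁.le]
      exact hAb t
    · intro z _
      exact ((ContinuousLinearMap.apply ℝ E z).continuous.comp hAc).continuousOn
    · intro t _ z hz
      have h1 : ‖z‖ ≤ ‖ξ‖ + (‖ξ‖ + 1) := by
        have : ‖z - ξ‖ ≤ ‖ξ‖ + 1 := mem_closedBall_iff_norm.mp hz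
        calc ‖z‖ ≤ ‖ξ‖ + ‖z - ξ‖ := by
              have := norm_sub_norm_le z ξ; linarith
          _ ≤ ‖ξ‖ + (‖ξ‖ + 1) := by linarith
      calc ‖A t z‖ ≤ ‖A t‖ * ‖z‖ := (A t).le_opNorm z
        _ ≤ L₁ * (2 * ‖ξ‖ + 2) := by
            apply mul_le_mul (hAb t) (by linarith) (norm_nonneg z) hL₁.le
    · have hm : max (τ - 0) (0 - 0) = τ := by
        rw [sub_zero, sub_zero, max_eq_left hτ.le]
      simp only [NNReal.coe_mk, NNReal.coe_zero, tsub_zero, sub_zero]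
      show L₁ * (2 * ‖ξ‖ + 2) * max τ 0 ≤ ‖ξ‖ + 1
      rw [max_eq_left hτ.le]
      have h0 : 0 ≤ ‖ξ‖ := norm_nonneg ξ
      nlinarith [mul_le_mul_of_nonneg_right hsmall (by linarith : (0:ℝ) ≤ 2 * ‖ξ‖ + 2)]
  obtain ⟨w, hw0, hw⟩ := hpl.exists_eq_forall_mem_Icc_hasDerivWithinAt₀
  exact ⟨w, hw0, hw⟩

/-- exp a - 1 ≤ a * exp a for a ≥ 0 -/
theorem exp_sub_one_le {a : ℝ} (ha : 0 ≤ a) : exp a - 1 ≤ a * exp a := by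
  have h1 := add_one_le_exp (-a)
  have h2 : exp a * exp (-a) = 1 := by rw [← Real.exp_add]; simp
  nlinarith [mul_le_mul_of_nonneg_left h1 (exp_pos a).le]

theorem small_step [CompleteSpace E] [ProperSpace E]
    {τ L₁ : ℝ} (hτ : 0 < τ) (hL₁ : 0 < L₁) (hsmall : L₁ * τ ≤ 1 / 2)
    {f : E → E} (hf : ContDiff ℝ 1 f) (hf1 : ∀ x, ‖fderiv ℝ f x‖ ≤ L₁)
    {U : E → ℝ → E} (hU0 : ∀ x, U x 0 = x) (hU : ∀ x t, HasDerivAt (U x) (f (U x t)) t)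
    (x₀ : E) :
    ∃ W : E →L[ℝ] E, HasFDerivAt (fun x => U x τ) W x₀ ∧ ‖W‖ ≤ exp (L₁ * τ) ∧
      ‖W - ContinuousLinearMap.id ℝ E‖ ≤ exp (L₁ * τ) - 1 := by
  have hfd : Differentiable ℝ f := hf.differentiable one_ne_zero
  -- Lipschitz constant for f
  have hflip : ∀ t : ℝ, LipschitzWith L₁.toNNReal f := by
    intro t
    apply lipschitzWith_of_nnnorm_fderiv_le hfd
    intro x
    rw [← NNReal.coe_le_coe, coe_nnnorm, Real.coe_toNNReal _ hL₁.le]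
    exact hf1 x
  have hcoe : (L₁.toNNReal : ℝ) = L₁ := Real.coe_toNNReal _ hL₁.le
  -- continuity of trajectories
  have hUcont : ∀ x, Continuous (U x) := fun x =>
    continuous_iff_continuousAt.2 fun t => (hU x t).continuousAt
  -- flow Lipschitz estimate
  have hflow : ∀ y t, t ∈ Icc 0 τ → dist (U y t) (U x₀ t) ≤ dist y x₀ * exp (L₁ * t) := by
    intro y t ht
    have h := dist_le_of_trajectories_ODE (v := fun _ z => f z) hflip
      ((hUcont y).continuousOn)
      (fun s _ => (hU y s).hasDerivWithinAt)
      ((hUcont x₀).continuousOn)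
      (fun s _ => (hU x₀ s).hasDerivWithinAt)
      (le_of_eq (by rw [hU0, hU0])) t ht
    rwa [hcoe, sub_zero] at h
  -- the variational operator family
  set A : ℝ → E →L[ℝ] E := fun t => fderiv ℝ f (U x₀ t) with hA
  have hAc : Continuous A := (hf.continuous_fderiv one_ne_zero).comp (hUcont x₀)
  have hAb : ∀ t, ‖A t‖ ≤ L₁ := fun t => hf1 _
  -- solutions of the variational equation
  choose sol hsol0 hsolderiv using variational_exists hτ hL₁ hsmall A hAc hAb
  have hsolIci : ∀ ξ, ∀ t ∈ Ico 0 τ, HasDerivWithinAt (sol ξ) (A t (sol ξ t)) (Ici t) t :=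
    fun ξ t ht => (hsolderiv ξ t (Ico_subset_Icc_self ht)).mono_of_mem_nhdsWithin
      (Icc_mem_nhdsGE_of_mem ht)
  have hsolc : ∀ ξ, ContinuousOn (sol ξ) (Icc 0 τ) :=
    fun ξ t ht => (hsolderiv ξ t ht).continuousWithinAt
  -- uniqueness on [0, τ]
  have huniq : ∀ w₁ w₂ : ℝ → E, w₁ 0 = w₂ 0 →
      (∀ t ∈ Icc 0 τ, ContinuousWithinAt w₁ (Icc 0 τ) t) →
      (∀ t ∈ Icc 0 τ, ContinuousWithinAt w₂ (Icc 0 τ) t) →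
      (∀ t ∈ Ico 0 τ, HasDerivWithinAt w₁ (A t (w₁ t)) (Ici t) t) →
      (∀ t ∈ Ico 0 τ, HasDerivWithinAt w₂ (A t (w₂ t)) (Ici t) t) →
      w₁ τ = w₂ τ := by
    intro w₁ w₂ h0 hc1 hc2 h1 h2
    have hAlip : ∀ t : ℝ, LipschitzWith L₁.toNNReal (fun z => A t z) := by
      intro t
      refine (A t).lipschitz.weaken ?_
      rw [← NNReal.coe_le_coe, coe_nnnorm, hcoe]
      exact hAb t
    exact ODE_solution_unique (v := fun t z => A t z) hAlip hc1 h1 hc2 h2 h0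
      (right_mem_Icc.2 hτ.le)
  -- linearity
  have hadd : ∀ ξ η, sol (ξ + η) τ = sol ξ τ + sol η τ := by
    intro ξ η
    apply huniq
    · rw [hsol0, hsol0, hsol0]
    · exact fun t ht => (hsolderiv _ t ht).continuousWithinAt
    · exact fun t ht => ((hsolderiv ξ t ht).add (hsolderiv η t ht)).continuousWithinAt
    · exact hsolIci _
    · intro t ht
      exact ((hsolIci ξ t ht).add (hsolIci η t ht)).congr_deriv (by simp [map_add])
  have hsmul : ∀ (c : ℝ) ξ, sol (c • ξ) τ = c • sol ξ τ := by
    intro c ξ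
    apply huniq
    · rw [hsol0, hsol0]
    · exact fun t ht => (hsolderiv _ t ht).continuousWithinAt
    · exact fun t ht => ((hsolderiv ξ t ht).const_smul c).continuousWithinAt
    · exact hsolIci _
    · intro t ht
      exact ((hsolIci ξ t ht).const_smul c).congr_deriv (by simp [map_smul])
  -- norm bound on sol
  have hsolbound : ∀ ξ, ‖sol ξ τ‖ ≤ ‖ξ‖ * exp (L₁ * τ) := by
    intro ξ
    have h := gron_aux (u' := fun t => A t (sol ξ t)) (ε := 0) hL₁ hτ.le (hsolc ξ)
      (hsolIci ξ) (by rw [hsol0]) ?_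
    · simpa using h
    · intro t _
      calc ‖A t (sol ξ t)‖ ≤ ‖A t‖ * ‖sol ξ t‖ := (A t).le_opNorm _
        _ ≤ L₁ * ‖sol ξ t‖ + 0 := by
            rw [add_zero]
            exact mul_le_mul_of_nonneg_right (hAb t) (norm_nonneg _)
  -- bound for sol ξ τ - ξ
  have hsolsub : ∀ ξ, ‖sol ξ τ - ξ‖ ≤ (exp (L₁ * τ) - 1) * ‖ξ‖ := by
    intro ξ
    have h := gron_aux (u := fun t => sol ξ t - ξ) (u' := fun t => A t (sol ξ t))
      (ε := L₁ * ‖ξ‖) (δ := 0) hL₁ hτ.le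
      ((hsolc ξ).sub continuousOn_const)
      (fun t ht => (hsolIci ξ t ht).sub_const ξ)
      (by show ‖sol ξ 0 - ξ‖ ≤ (0:ℝ); rw [hsol0]; simp) ?_
    · calc ‖sol ξ τ - ξ‖ ≤ 0 * exp (L₁ * τ) + L₁ * ‖ξ‖ / L₁ * (exp (L₁ * τ) - 1) := h
        _ = (exp (L₁ * τ) - 1) * ‖ξ‖ := by field_simp; ring
    · intro t _
      have h1 : ‖sol ξ t‖ ≤ ‖sol ξ t - ξ‖ + ‖ξ‖ := by
        have := norm_sub_norm_le (sol ξ t) ξ; linarith [norm_sub_norm_le (sol ξ t) ξ,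
          norm_le_norm_add_norm_sub' (sol ξ t) ξ]
      calc ‖A t (sol ξ t)‖ ≤ ‖A t‖ * ‖sol ξ t‖ := (A t).le_opNorm _
        _ ≤ L₁ * ‖sol ξ t‖ := mul_le_mul_of_nonneg_right (hAb t) (norm_nonneg _)
        _ ≤ L₁ * (‖sol ξ t - ξ‖ + ‖ξ‖) := mul_le_mul_of_nonneg_left h1 hL₁.le
        _ = L₁ * ‖sol ξ t - ξ‖ + L₁ * ‖ξ‖ := by ring
  -- the candidate derivative
  let Wlin : E →ₗ[ℝ] E :=
    { toFun := fun ξ => sol ξ τ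
      map_add' := hadd
      map_smul' := hsmul }
  let W : E →L[ℝ] E := Wlin.mkContinuous (exp (L₁ * τ))
    (fun ξ => by show ‖sol ξ τ‖ ≤ _; simpa [mul_comm] using hsolbound ξ)
  have hWapp : ∀ ξ, W ξ = sol ξ τ := fun ξ => rfl
  refine ⟨W, ?_, ?_, ?_⟩
  · -- HasFDerivAt
    refine HasFDerivAt.of_isLittleO ?_
    rw [isLittleO_iff]
    intro c hc
    have hKcpt : IsCompact (cthickening 1 (U x₀ '' Icc 0 τ)) :=
      ((isCompact_Icc).image (hUcont x₀)).cthickening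
    have hunif := hKcpt.uniformContinuousOn_of_continuous
      ((hf.continuous_fderiv one_ne_zero).continuousOn)
    set c' := c / (τ * exp (2 * (L₁ * τ)) + 1) with hc'def
    have hDpos : 0 < τ * exp (2 * (L₁ * τ)) + 1 := by positivity
    have hc'pos : 0 < c' := by positivity
    obtain ⟨δ₀, hδ₀pos, hδ₀⟩ := Metric.uniformContinuousOn_iff.mp hunif c' hc'pos
    set δ₁ := min (δ₀ / 2) 1 with hδ₁def
    have hδ₁pos : 0 < δ₁ := lt_min (by linarith) one_pos
    have hδ₁le1 : δ₁ ≤ 1 := min_le_right _ _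
    have hδ₁ltδ₀ : δ₁ < δ₀ := lt_of_le_of_lt (min_le_left _ _) (by linarith)
    set δ := δ₁ * exp (-(L₁ * τ)) with hδdef
    have hδpos : 0 < δ := by positivity
    rw [Metric.eventually_nhds_iff]
    refine ⟨δ, hδpos, ?_⟩
    intro y hy
    set ξ := y - x₀ with hξdef
    have hξnorm : ‖ξ‖ < δ := by rwa [hξdef, ← dist_eq_norm]
    -- trajectories stay close
    have hclose : ∀ t ∈ Icc 0 τ, ‖U y t - U x₀ t‖ ≤ δ₁ := by
      intro t ht
      have h1 := hflow y t ht
      have h2 : exp (L₁ * t) ≤ exp (L₁ * τ) :=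
        exp_le_exp.2 (mul_le_mul_of_nonneg_left ht.2 hL₁.le)
      have h3 : dist y x₀ * exp (L₁ * t) ≤ δ * exp (L₁ * τ) := by
        apply mul_le_mul (le_of_lt (by rwa [dist_eq_norm])) h2 (exp_pos _).le hδpos.le
      rw [← dist_eq_norm]
      calc dist (U y t) (U x₀ t) ≤ δ * exp (L₁ * τ) := le_trans h1 h3
        _ = δ₁ := by rw [hδdef, mul_assoc, ← Real.exp_add]; simp
    have hclose2 : ∀ t ∈ Icc 0 τ, ‖U y t - U x₀ t‖ ≤ exp (L₁ * τ) * ‖ξ‖ := by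
      intro t ht
      have h1 := hflow y t ht
      have h2 : exp (L₁ * t) ≤ exp (L₁ * τ) :=
        exp_le_exp.2 (mul_le_mul_of_nonneg_left ht.2 hL₁.le)
      rw [← dist_eq_norm]
      calc dist (U y t) (U x₀ t) ≤ dist y x₀ * exp (L₁ * t) := h1
        _ ≤ ‖ξ‖ * exp (L₁ * τ) := by
            rw [dist_eq_norm]
            exact mul_le_mul_of_nonneg_left h2 (norm_nonneg _)
        _ = exp (L₁ * τ) * ‖ξ‖ := mul_comm _ _
    -- key linearization estimate
    have est2 : ∀ s ∈ Icc 0 τ,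
        ‖f (U y s) - f (U x₀ s) - A s (U y s - U x₀ s)‖ ≤ c' * ‖U y s - U x₀ s‖ := by
      intro s hs
      have hxK : U x₀ s ∈ cthickening 1 (U x₀ '' Icc 0 τ) :=
        self_subset_cthickening _ (mem_image_of_mem _ hs)
      apply (convex_segment (U x₀ s) (U y s)).norm_image_sub_le_of_norm_hasFDerivWithin_le'
        (f' := fun z => fderiv ℝ f z) (φ := A s)
        (fun z _ => (hfd z).hasFDerivAt.hasFDerivWithinAt) ?_
        (left_mem_segment ℝ _ _) (right_mem_segment ℝ _ _)
      intro z hz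
      have hdz : dist (U x₀ s) z ≤ δ₁ := by
        have h := dist_add_dist_of_mem_segment hz
        have h2 : dist (U x₀ s) (U y s) ≤ δ₁ := by
          rw [dist_eq_norm, norm_sub_rev]; exact hclose s hs
        have := dist_nonneg (α := E) (x := z) (y := U y s)
        linarith
      have hzK : z ∈ cthickening 1 (U x₀ '' Icc 0 τ) := by
        apply mem_cthickening_of_dist_le z (U x₀ s) 1 _ (mem_image_of_mem _ hs)
        rw [dist_comm] at hdz
        linarith
      have := hδ₀ z hzK (U x₀ s) hxK (by rw [dist_comm] at hdz; linarith)
      rw [dist_eq_norm] at this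
      exact le_of_lt this
    -- Grönwall for the remainder
    set r : ℝ → E := fun t => U y t - U x₀ t - sol ξ t with hrdef
    have hr0 : r 0 = 0 := by
      rw [hrdef]; simp only [hU0, hsol0]; rw [hξdef]; abel
    have hrc : ContinuousOn r (Icc 0 τ) :=
      (((hUcont y).continuousOn.sub (hUcont x₀).continuousOn)).sub (hsolc ξ)
    have hrd : ∀ t ∈ Ico 0 τ, HasDerivWithinAt r
        (f (U y t) - f (U x₀ t) - A t (sol ξ t)) (Ici t) t :=
      fun t ht => (((hU y t).sub (hU x₀ t)).hasDerivWithinAt).sub (hsolIci ξ t ht)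
    have hrb : ∀ t ∈ Ico 0 τ, ‖f (U y t) - f (U x₀ t) - A t (sol ξ t)‖
        ≤ L₁ * ‖r t‖ + c' * (exp (L₁ * τ) * ‖ξ‖) := by
      intro t ht
      have hkey : f (U y t) - f (U x₀ t) - A t (sol ξ t)
          = (A t) (r t) + (f (U y t) - f (U x₀ t) - A t (U y t - U x₀ t)) := by
        rw [hrdef]; simp only [map_sub]; abel
      rw [hkey]
      calc ‖(A t) (r t) + (f (U y t) - f (U x₀ t) - A t (U y t - U x₀ t))‖
          ≤ ‖(A t) (r t)‖ + ‖f (U y t) - f (U x₀ t) - A t (U y t - U x₀ t)‖ :=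
            norm_add_le _ _
        _ ≤ L₁ * ‖r t‖ + c' * (exp (L₁ * τ) * ‖ξ‖) := by
            apply add_le_add
            · calc ‖(A t) (r t)‖ ≤ ‖A t‖ * ‖r t‖ := (A t).le_opNorm _
                _ ≤ L₁ * ‖r t‖ := mul_le_mul_of_nonneg_right (hAb t) (norm_nonneg _)
            · calc ‖f (U y t) - f (U x₀ t) - A t (U y t - U x₀ t)‖
                  ≤ c' * ‖U y t - U x₀ t‖ := est2 t (Ico_subset_Icc_self ht)
                _ ≤ c' * (exp (L₁ * τ) * ‖ξ‖) :=
                    mul_le_mul_of_nonneg_left (hclose2 t (Ico_subset_Icc_self ht)) hc'pos.le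
    have hgron := gron_aux (δ := 0) hL₁ hτ.le hrc hrd (by rw [hr0]; simp) hrb
    -- conclude
    have hWξ : W ξ = sol ξ τ := rfl
    have hfin : ‖U y τ - U x₀ τ - W (y - x₀)‖ ≤ c * ‖y - x₀‖ := by
      rw [← hξdef, hWξ]
      have h1 : exp (L₁ * τ) - 1 ≤ (L₁ * τ) * exp (L₁ * τ) :=
        exp_sub_one_le (by positivity)
      have h2 : ‖r τ‖ ≤ c' * (exp (L₁ * τ) * ‖ξ‖) / L₁ * (exp (L₁ * τ) - 1) := by
        simpa using hgron
      have h3 : c' * (exp (L₁ * τ) * ‖ξ‖) / L₁ * (exp (L₁ * τ) - 1)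
          ≤ c' * (exp (L₁ * τ) * ‖ξ‖) / L₁ * ((L₁ * τ) * exp (L₁ * τ)) := by
        apply mul_le_mul_of_nonneg_left h1
        positivity
      have h4 : c' * (exp (L₁ * τ) * ‖ξ‖) / L₁ * ((L₁ * τ) * exp (L₁ * τ))
          = c' * (τ * exp (2 * (L₁ * τ))) * ‖ξ‖ := by
        rw [two_mul, Real.exp_add]
        field_simp
      have h5 : c' * (τ * exp (2 * (L₁ * τ))) * ‖ξ‖ ≤ c * ‖ξ‖ := by
        apply mul_le_mul_of_nonneg_right _ (norm_nonneg _)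
        rw [hc'def]
        rw [div_mul_eq_mul_div, div_le_iff₀ hDpos]
        nlinarith [mul_pos hc hDpos]
      show ‖r τ‖ ≤ c * ‖ξ‖
      linarith
    exact hfin
  · exact Wlin.mkContinuous_norm_le (exp_nonneg _) _
  · apply ContinuousLinearMap.opNorm_le_bound _ (by nlinarith [one_le_exp (by positivity : (0:ℝ) ≤ L₁ * τ)]) 
    intro ξ
    simpa [hWapp] using hsolsub ξ

end Stmt0Aux

open Stmt0Aux in
/-- Lemma `lmm:stubble:smooth`.
For a continuously differentiable `f : ℝ^d → ℝ^d` with `‖f‖ ≤ L₀` and `‖Df‖_op ≤ L₁`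
everywhere, the increment map `ι x = Υ(f, Δt, x) = U(f, x, Δt) - x` of the flow `U`
of the ODE `u̇ = f(u)` satisfies `‖ι x‖ ≤ Δt·L₀` and `‖Dι x‖_op ≤ exp(L₁·Δt) - 1`
for all `x`. -/
theorem stmt0 (d : ℕ) (Δt L₀ L₁ : ℝ) (hΔt : 0 < Δt) (hL₀ : 0 < L₀) (hL₁ : 0 < L₁)
    (f : EuclideanSpace ℝ (Fin d) → EuclideanSpace ℝ (Fin d))
    (hf : ContDiff ℝ 1 f)
    (hf0 : ∀ x, ‖f x‖ ≤ L₀)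
    (hf1 : ∀ x, ‖fderiv ℝ f x‖ ≤ L₁)
    (U : EuclideanSpace ℝ (Fin d) → ℝ → EuclideanSpace ℝ (Fin d))
    (hU0 : ∀ x, U x 0 = x)
    (hU : ∀ x t, HasDerivAt (U x) (f (U x t)) t) :
    (∀ x, ‖U x Δt - x‖ ≤ Δt * L₀) ∧
    Differentiable ℝ (fun x => U x Δt - x) ∧
    (∀ x, ‖fderiv ℝ (fun y => U y Δt - y) x‖ ≤ Real.exp (L₁ * Δt) - 1) := by
  -- part 1
  have part1 : ∀ x, ‖U x Δt - x‖ ≤ Δt * L₀ := by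
    intro x
    have h := (convex_Icc (0:ℝ) Δt).norm_image_sub_le_of_norm_hasDerivWithin_le
      (f' := fun t => f (U x t)) (fun t _ => (hU x t).hasDerivWithinAt)
      (fun t _ => hf0 _) (left_mem_Icc.2 hΔt.le) (right_mem_Icc.2 hΔt.le)
    rw [hU0] at h
    calc ‖U x Δt - x‖ ≤ L₀ * ‖Δt - 0‖ := h
      _ = Δt * L₀ := by
          rw [sub_zero, Real.norm_of_nonneg hΔt.le]; ring
  -- basic facts
  have hfd : Differentiable ℝ f := hf.differentiable one_ne_zero
  have hflip : ∀ t : ℝ, LipschitzWith L₁.toNNReal f := by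
    intro t
    apply lipschitzWith_of_nnnorm_fderiv_le hfd
    intro x
    rw [← NNReal.coe_le_coe, coe_nnnorm, Real.coe_toNNReal _ hL₁.le]
    exact hf1 x
  have hUcont : ∀ x : EuclideanSpace ℝ (Fin d), Continuous (U x) := fun x =>
    continuous_iff_continuousAt.2 fun t => (hU x t).continuousAt
  -- semigroup property
  have hsemi : ∀ (x : EuclideanSpace ℝ (Fin d)) (a t : ℝ), 0 ≤ t → U (U x a) t = U x (a + t) := by
    intro x a t ht
    rcases eq_or_lt_of_le ht with h | h
    · rw [← h, hU0, add_zero]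
    have hG : ∀ s : ℝ, HasDerivAt (fun s => U x (a + s)) (f (U x (a + s))) s := by
      intro s
      have h1 : HasDerivAt (fun s : ℝ => a + s) 1 s := by
        simpa using (hasDerivAt_id s).const_add a
      have h2 := (hU x (a + s)).scomp s h1
      simpa [Function.comp_def] using h2
    have hGc : Continuous fun s : ℝ => U x (a + s) :=
      (hUcont x).comp (continuous_const.add continuous_id)
    have heq := ODE_solution_unique (v := fun _ z => f z) (a := 0) (b := t) hflip
      ((hUcont (U x a)).continuousOn)
      (fun s _ => (hU (U x a) s).hasDerivWithinAt)
      hGc.continuousOn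
      (fun s _ => (hG s).hasDerivWithinAt)
      (show U (U x a) 0 = U x (a + 0) by simp [hU0])
    exact heq (right_mem_Icc.2 ht)
  -- small time step
  set n : ℕ := ⌈2 * L₁ * Δt⌉₊ with hn
  have hnpos : 0 < n := Nat.ceil_pos.2 (by positivity)
  have hncast : (0:ℝ) < n := Nat.cast_pos.2 hnpos
  set τ : ℝ := Δt / n with hτdef
  have hτpos : 0 < τ := div_pos hΔt hncast
  have hsmall : L₁ * τ ≤ 1 / 2 := by
    have h := Nat.le_ceil (2 * L₁ * Δt)
    rw [hτdef, mul_div_assoc', div_le_iff₀ hncast]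
    rw [← hn] at h
    linarith
  have hnτ : (n:ℝ) * τ = Δt := by
    rw [hτdef]
    field_simp
  -- iterates of the time-τ flow
  have hiter : ∀ (k : ℕ) (x : EuclideanSpace ℝ (Fin d)), (fun z => U z τ)^[k] x = U x (k * τ) := by
    intro k
    induction k with
    | zero => intro x; simp [hU0]
    | succ k ih =>
      intro x
      rw [Function.iterate_succ_apply, ih (U x τ),
        hsemi x τ (k * τ) (by positivity)]
      congr 1
      push_cast
      ring
  have hstep := fun x : EuclideanSpace ℝ (Fin d) => small_step hτpos hL₁ hsmall hf hf1 hU0 hU x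
  have hiterD : ∀ (k : ℕ) (x : EuclideanSpace ℝ (Fin d)), ∃ D : EuclideanSpace ℝ (Fin d) →L[ℝ] EuclideanSpace ℝ (Fin d),
      HasFDerivAt ((fun z => U z τ)^[k]) D x ∧
      ‖D‖ ≤ Real.exp (L₁ * (k * τ)) ∧
      ‖D - ContinuousLinearMap.id ℝ (EuclideanSpace ℝ (Fin d))‖ ≤ Real.exp (L₁ * (k * τ)) - 1 := by
    intro k
    induction k with
    | zero =>
      intro x
      have h0 : L₁ * ((0:ℕ) * τ) = 0 := by push_cast; ring
      refine ⟨ContinuousLinearMap.id ℝ (EuclideanSpace ℝ (Fin d)),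
        by simpa using hasFDerivAt_id x, ?_, ?_⟩
      · rw [h0, Real.exp_zero]; exact ContinuousLinearMap.norm_id_le
      · simp only [h0, Real.exp_zero, sub_self, norm_zero]
        norm_num
    | succ k ih =>
      intro x
      obtain ⟨D, hD, hDn, hDi⟩ := ih x
      obtain ⟨W, hW, hWn, hWi⟩ := hstep ((fun z => U z τ)^[k] x)
      have hexp : Real.exp (L₁ * ((k + 1 : ℕ) * τ))
          = Real.exp (L₁ * τ) * Real.exp (L₁ * (k * τ)) := by
        rw [← Real.exp_add]
        congr 1
        push_cast
        ring
      refine ⟨W.comp D, ?_, ?_, ?_⟩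
      · rw [Function.iterate_succ']
        exact hW.comp x hD
      · calc ‖W.comp D‖ ≤ ‖W‖ * ‖D‖ := ContinuousLinearMap.opNorm_comp_le _ _
          _ ≤ Real.exp (L₁ * τ) * Real.exp (L₁ * (k * τ)) :=
              mul_le_mul hWn hDn (norm_nonneg _) (Real.exp_nonneg _)
          _ = Real.exp (L₁ * ((k + 1 : ℕ) * τ)) := hexp.symm
      · have h1 : W.comp D - ContinuousLinearMap.id ℝ (EuclideanSpace ℝ (Fin d))
            = (W - ContinuousLinearMap.id ℝ (EuclideanSpace ℝ (Fin d))).comp D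
              + (D - ContinuousLinearMap.id ℝ (EuclideanSpace ℝ (Fin d))) := by
          rw [ContinuousLinearMap.sub_comp, ContinuousLinearMap.id_comp]
          abel
        rw [h1]
        have h2 : ‖(W - ContinuousLinearMap.id ℝ (EuclideanSpace ℝ (Fin d))).comp D‖
            ≤ (Real.exp (L₁ * τ) - 1) * Real.exp (L₁ * (k * τ)) := by
          calc ‖(W - ContinuousLinearMap.id ℝ (EuclideanSpace ℝ (Fin d))).comp D‖
              ≤ ‖W - ContinuousLinearMap.id ℝ (EuclideanSpace ℝ (Fin d))‖ * ‖D‖ :=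
                ContinuousLinearMap.opNorm_comp_le _ _
            _ ≤ (Real.exp (L₁ * τ) - 1) * Real.exp (L₁ * (k * τ)) := by
                apply mul_le_mul hWi hDn (norm_nonneg _)
                have := Real.one_le_exp (by positivity : (0:ℝ) ≤ L₁ * τ)
                linarith
        calc ‖(W - ContinuousLinearMap.id ℝ (EuclideanSpace ℝ (Fin d))).comp D
              + (D - ContinuousLinearMap.id ℝ (EuclideanSpace ℝ (Fin d)))‖
            ≤ ‖(W - ContinuousLinearMap.id ℝ (EuclideanSpace ℝ (Fin d))).comp D‖
              + ‖D - ContinuousLinearMap.id ℝ (EuclideanSpace ℝ (Fin d))‖ := norm_add_le _ _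
          _ ≤ Real.exp (L₁ * ((k + 1 : ℕ) * τ)) - 1 := by
              rw [hexp]; nlinarith [Real.exp_pos (L₁ * (k * τ))]
  -- derivative of the full flow
  have hflowD : ∀ x : EuclideanSpace ℝ (Fin d), ∃ D : EuclideanSpace ℝ (Fin d) →L[ℝ] EuclideanSpace ℝ (Fin d), HasFDerivAt (fun y => U y Δt) D x ∧
      ‖D - ContinuousLinearMap.id ℝ (EuclideanSpace ℝ (Fin d))‖ ≤ Real.exp (L₁ * Δt) - 1 := by
    intro x
    obtain ⟨D, hD, _, hDi⟩ := hiterD n x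
    have hfun : (fun z : EuclideanSpace ℝ (Fin d) => U z τ)^[n] = fun y => U y Δt := by
      funext y
      rw [hiter n y, hnτ]
    rw [hfun] at hD
    rw [hnτ] at hDi
    exact ⟨D, hD, hDi⟩
  refine ⟨part1, ?_, ?_⟩
  · intro x
    obtain ⟨D, hD, _⟩ := hflowD x
    exact (hD.sub (hasFDerivAt_id x)).differentiableAt
  · intro x
    obtain ⟨D, hD, hDi⟩ := hflowD x
    have hsub : HasFDerivAt (fun y => U y Δt - y)
        (D - ContinuousLinearMap.id ℝ (EuclideanSpace ℝ (Fin d))) x :=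
      hD.sub (hasFDerivAt_id x)
    rw [hsub.fderiv]
    exact hDi
end

section
/- Let S be a finite linearly ordered set with at least one element. Then the number of increasing trees with node set S equals (#S − 1)!. -/
section Tree
variable {S : Type*} [Fintype S] [LinearOrder S] [Nonempty S]

abbrev TreeSet (S : Type*) [Fintype S] [LinearOrder S] [Nonempty S] :=
  {E : Finset (S × S) //
      (∀ e ∈ E, e.1 < e.2) ∧
      E.card = Fintype.card S - 1 ∧
      (∀ n : S, n ≠ Finset.univ.min' Finset.univ_nonempty →
        ∃! e : S × S, e ∈ E ∧ e.2 = n)}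

abbrev NonMin (S : Type*) [Fintype S] [LinearOrder S] [Nonempty S] :=
  {n : S // n ≠ Finset.univ.min' Finset.univ_nonempty}

noncomputable def parentFun (E : TreeSet S) (n : NonMin S) : {m : S // m < n.1} :=
  ⟨((E.2.2.2 n.1 n.2).exists.choose).1, by
    have h := (E.2.2.2 n.1 n.2).exists.choose_spec
    have h2 := E.2.1 _ h.1
    rwa [h.2] at h2⟩

lemma parentFun_choose_eq (E : TreeSet S) (n : NonMin S) {e : S × S}
    (he : e ∈ E.1) (h2 : e.2 = n.1) : (E.2.2.2 n.1 n.2).exists.choose = e :=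
  (E.2.2.2 n.1 n.2).unique (E.2.2.2 n.1 n.2).exists.choose_spec ⟨he, h2⟩

lemma parentFun_eq (E : TreeSet S) (n : NonMin S) {e : S × S}
    (he : e ∈ E.1) (h2 : e.2 = n.1) : ((parentFun E n : S), (n : S)) = e := by
  have h := parentFun_choose_eq E n he h2
  have hsnd := (E.2.2.2 n.1 n.2).exists.choose_spec.2
  calc ((parentFun E n : S), (n : S)) = (E.2.2.2 n.1 n.2).exists.choose :=
        Prod.ext rfl hsnd.symm
    _ = e := h

lemma parentFun_mem (E : TreeSet S) (n : NonMin S) :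
    ((parentFun E n : S), (n : S)) ∈ E.1 := by
  have h := (E.2.2.2 n.1 n.2).exists.choose_spec
  have : ((parentFun E n : S), (n : S)) = (E.2.2.2 n.1 n.2).exists.choose :=
    Prod.ext rfl h.2.symm
  rw [this]; exact h.1

noncomputable def treeOfFun (f : (n : NonMin S) → {m : S // m < n.1}) : TreeSet S := by
  classical
  refine ⟨Finset.univ.image (fun n : NonMin S => ((f n : S), (n : S))), ?_, ?_, ?_⟩
  · intro e he
    obtain ⟨n, -, rfl⟩ := Finset.mem_image.1 he
    exact (f n).2
  · rw [Finset.card_image_of_injective _ (fun a b hab => Subtype.ext (congrArg Prod.snd hab)),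
      Finset.card_univ, Fintype.card_subtype_compl, Fintype.card_subtype_eq]
  · intro n hn
    refine ⟨((f ⟨n, hn⟩ : S), n), ⟨Finset.mem_image_of_mem _ (Finset.mem_univ _), rfl⟩, ?_⟩
    rintro e ⟨he, rfl⟩
    obtain ⟨n', -, rfl⟩ := Finset.mem_image.1 he
    rfl

noncomputable def treeEquiv :
    TreeSet S ≃ ((n : NonMin S) → {m : S // m < n.1}) where
  toFun := parentFun
  invFun := treeOfFun
  left_inv := by
    rintro ⟨E, h1, h2, h3⟩
    apply Subtype.ext
    ext e
    simp only [treeOfFun, Finset.mem_image, Finset.mem_univ, true_and]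
    constructor
    · rintro ⟨n, rfl⟩
      exact parentFun_mem ⟨E, h1, h2, h3⟩ n
    · intro he
      have hne : e.2 ≠ Finset.univ.min' Finset.univ_nonempty := by
        intro hh
        exact absurd (hh ▸ h1 e he) (not_lt.2 (Finset.min'_le _ _ (Finset.mem_univ _)))
      exact ⟨⟨e.2, hne⟩, parentFun_eq ⟨E, h1, h2, h3⟩ ⟨e.2, hne⟩ he rfl⟩
  right_inv := by
    intro f
    funext n
    apply Subtype.ext
    have he : ((f n : S), (n : S)) ∈ (treeOfFun f).1 :=
      Finset.mem_image_of_mem _ (Finset.mem_univ _)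
    exact congrArg Prod.fst (parentFun_eq (treeOfFun f) n he rfl)

end Tree

lemma fin_prod_erase_zero (M : ℕ) :
    ∏ j ∈ (Finset.univ : Finset (Fin (M+1))).erase 0, (j : ℕ) = Nat.factorial M := by
  rw [← Finset.prod_Ico_id_eq_factorial M]
  refine Finset.prod_nbij' (fun j => (j : ℕ))
    (fun k => (⟨k % (M+1), Nat.mod_lt _ (Nat.succ_pos _)⟩ : Fin (M+1))) ?_ ?_ ?_ ?_ ?_
  · intro a ha
    simp only [Finset.mem_erase, Finset.mem_univ, and_true] at ha
    simp only [Finset.mem_Ico]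
    have h1 : (a : ℕ) < M + 1 := a.isLt
    have h2 : (a : ℕ) ≠ 0 := fun h => ha (Fin.ext h)
    omega
  · intro k hk
    simp only [Finset.mem_Ico] at hk
    simp only [Finset.mem_erase, Finset.mem_univ, and_true]
    intro h
    have := congrArg Fin.val h
    simp only [Nat.mod_eq_of_lt (by omega : k < M + 1), Fin.val_zero] at this
    omega
  · intro a ha
    apply Fin.ext
    simp [Nat.mod_eq_of_lt a.isLt]
  · intro k hk
    simp only [Finset.mem_Ico] at hk
    simp [Nat.mod_eq_of_lt (by omega : k < M + 1)]
  · intro a ha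
    rfl

/-- Lemma `lmm:numtrees`.
Let `S` be a nonempty finite linearly ordered set.  An increasing tree on `S` is a set
`E` of edges `(n₁, n₂)` with `n₁ < n₂` and `#E = #S − 1` such that every node other
than the minimum of `S` has exactly one incoming edge (necessarily from a strictly
smaller node).  The number of increasing trees with node set `S` is `(#S − 1)!`. -/
theorem stmt5 {S : Type*} [Fintype S] [LinearOrder S] [Nonempty S] :
    Nat.card {E : Finset (S × S) //
        (∀ e ∈ E, e.1 < e.2) ∧
        E.card = Fintype.card S - 1 ∧
        (∀ n : S, n ≠ Finset.univ.min' Finset.univ_nonempty →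
          ∃! e : S × S, e ∈ E ∧ e.2 = n)} =
      Nat.factorial (Fintype.card S - 1) := by
  classical
  obtain ⟨M, hN⟩ : ∃ M, Fintype.card S = M + 1 :=
    ⟨Fintype.card S - 1, (Nat.succ_pred_eq_of_pos Fintype.card_pos).symm⟩
  rw [Nat.card_eq_of_bijective _ (treeEquiv (S := S)).bijective, Nat.card_pi]
  set e : S ≃o Fin (M+1) := (Fintype.orderIsoFinOfCardEq S hN).symm with he
  set m0 : S := Finset.univ.min' Finset.univ_nonempty with hm0
  have hmin : e m0 = 0 := by
    refine le_antisymm ?_ (Fin.zero_le _)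
    have : m0 ≤ e.symm 0 := Finset.min'_le _ _ (Finset.mem_univ _)
    simpa using e.le_iff_le.2 this
  have key : ∀ x : S, Nat.card {m : S // m < x} = ((e x : Fin (M+1)) : ℕ) := by
    intro x
    have heq : {m : S // m < x} ≃ ↥(Set.Iio (e x)) :=
      e.toEquiv.subtypeEquiv (fun m => by simp [Set.mem_Iio])
    rw [Nat.card_congr heq, Nat.card_eq_fintype_card]
    rw [← Set.toFinset_card, Set.toFinset_Iio]; exact Fin.card_Iio (e x)
  calc ∏ n : NonMin S, Nat.card {m : S // m < n.1}
      = ∏ n : NonMin S, ((e n.1 : Fin (M+1)) : ℕ) := by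
        exact Finset.prod_congr rfl (fun n _ => key n.1)
    _ = ∏ j : {j : Fin (M+1) // j ≠ 0}, (j.1 : ℕ) := by
        have hq : ∀ n : S, n ≠ m0 ↔ e n ≠ 0 := by
          intro n
          rw [← hmin]
          exact not_congr (EmbeddingLike.apply_eq_iff_eq e).symm
        exact Fintype.prod_equiv (e.toEquiv.subtypeEquiv hq) _ _ (fun n => rfl)
    _ = ∏ j ∈ (Finset.univ : Finset (Fin (M+1))).erase 0, (j : ℕ) := by
        exact (Finset.prod_subtype ((Finset.univ : Finset (Fin (M+1))).erase 0)
          (fun j => by simp) (fun j : Fin (M+1) => (j : ℕ))).symm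
    _ = Nat.factorial M := fin_prod_erase_zero M
    _ = Nat.factorial (Fintype.card S - 1) := by simp [hN]
end

section
/- Let d, β ∈ ℕ and L₀, …, L_β > 0. Let f : ℝ^d → ℝ^d be β-times continuously differentiable with sup_{x∈ℝ^d} ‖D^k f(x)‖_op ≤ L_k for all k ∈ {0, …, β}, and set L := max_{0≤k≤β} L_k. Let x₀ ∈ ℝ^d and u := U(f, x₀, ·). Then u is (β+1)-times continuously differentiable, and for every k ∈ {1, …, β+1}, sup_{t∈ℝ} ‖D^k u(t)‖ ≤ (k−1)!·L^k. -/
noncomputable def Hseq {E : Type*} [NormedAddCommGroup E] [NormedSpace ℝ E]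
    (f : E → E) : ℕ → E → E
  | 0 => f
  | k+1 => fun x => fderiv ℝ (Hseq f k) x (f x)

theorem Hseq_contDiff {E : Type*} [NormedAddCommGroup E] [NormedSpace ℝ E]
    {f : E → E} {β : ℕ} (hf : ContDiff ℝ (β : ℕ∞) f) :
    ∀ k, k ≤ β → ContDiff ℝ ((β - k : ℕ) : ℕ∞) (Hseq f k) := by
  intro k
  induction k with
  | zero => intro _; simpa [Hseq] using hf
  | succ k ih =>
    intro hk
    have hk' : k ≤ β := le_of_lt hk
    have h1 : ContDiff ℝ ((β - k : ℕ) : ℕ∞) (Hseq f k) := ih hk'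
    have hd : ContDiff ℝ ((β - (k+1) : ℕ) : ℕ∞) (fderiv ℝ (Hseq f k)) := by
      apply h1.fderiv_right
      have : (β - (k+1)) + 1 = β - k := by omega
      norm_cast
      exact_mod_cast le_of_eq (by exact_mod_cast congrArg (Nat.cast : ℕ → ℕ∞) this)
    exact hd.clm_apply (hf.of_le (by exact_mod_cast Nat.sub_le β (k+1)))

theorem Hseq_bound {E : Type*} [NormedAddCommGroup E] [NormedSpace ℝ E]
    {f : E → E} {β : ℕ} (hf : ContDiff ℝ (β : ℕ∞) f) {L : ℝ} (hL0 : 0 ≤ L)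
    (hfL : ∀ j, j ≤ β → ∀ x, ‖iteratedFDeriv ℝ j f x‖ ≤ L) :
    ∀ k j, k + j ≤ β → ∀ x,
      ‖iteratedFDeriv ℝ j (Hseq f k) x‖ ≤ k.factorial * (k+1)^j * L^(k+1) := by
  intro k
  induction k with
  | zero =>
    intro j hj x
    simpa [Hseq] using hfL j (by omega) x
  | succ k ih =>
    intro j hj x
    have hk1 : k + 1 ≤ β := by omega
    have hcd : ContDiff ℝ ((β - (k+1) : ℕ) : ℕ∞) (Hseq f (k+1)) := Hseq_contDiff hf (k+1) hk1
    have hdd : ContDiff ℝ ((β - (k+1) : ℕ) : ℕ∞) (fderiv ℝ (Hseq f k)) := by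
      apply (Hseq_contDiff hf k (by omega)).fderiv_right
      have h2 : (β - (k+1)) + 1 = β - k := by omega
      exact_mod_cast le_of_eq (by exact_mod_cast congrArg (Nat.cast : ℕ → ℕ∞) h2)
    have hfc : ContDiff ℝ ((β - (k+1) : ℕ) : ℕ∞) f := hf.of_le (by exact_mod_cast Nat.sub_le β (k+1))
    have hjle : (j : WithTop ℕ∞) ≤ ((β - (k+1) : ℕ) : ℕ∞) := by exact_mod_cast (by omega : j ≤ β - (k+1))
    have hB := (ContinuousLinearMap.id ℝ (E →L[ℝ] E)).norm_iteratedFDeriv_le_of_bilinear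
      (f := fun y => fderiv ℝ (Hseq f k) y) (g := f) hdd hfc x hjle
    have hEq : (fun y => (ContinuousLinearMap.id ℝ (E →L[ℝ] E)) (fderiv ℝ (Hseq f k) y) (f y))
        = Hseq f (k+1) := rfl
    rw [hEq] at hB
    have hterm : ∀ i ∈ Finset.range (j + 1),
        (j.choose i : ℝ) * ‖iteratedFDeriv ℝ i (fun y => fderiv ℝ (Hseq f k) y) x‖ *
            ‖iteratedFDeriv ℝ (j - i) f x‖ ≤
          (j.choose i : ℝ) * ((k.factorial : ℝ) * (k+1)^(i+1) * L^(k+1)) * L := by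
      intro i hi
      have hi' : i ≤ j := by simpa [Nat.lt_succ_iff] using hi
      have h1 : ‖iteratedFDeriv ℝ i (fun y => fderiv ℝ (Hseq f k) y) x‖
          = ‖iteratedFDeriv ℝ (i+1) (Hseq f k) x‖ := norm_iteratedFDeriv_fderiv
      have h2 := ih (i+1) (by omega) x
      have h3 := hfL (j - i) (by omega) x
      have h4 : (0:ℝ) ≤ ‖iteratedFDeriv ℝ i (fun y => fderiv ℝ (Hseq f k) y) x‖ := norm_nonneg _
      apply mul_le_mul _ h3 (norm_nonneg _) (by positivity)
      exact mul_le_mul_of_nonneg_left (h1 ▸ h2) (by positivity)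
    have hsumle := Finset.sum_le_sum hterm
    have hS0 : (0:ℝ) ≤ ∑ i ∈ Finset.range (j + 1),
        (j.choose i : ℝ) * ‖iteratedFDeriv ℝ i (fun y => fderiv ℝ (Hseq f k) y) x‖ *
          ‖iteratedFDeriv ℝ (j - i) f x‖ :=
      Finset.sum_nonneg fun i _ => by positivity
    have hmain : ‖iteratedFDeriv ℝ j (Hseq f (k+1)) x‖ ≤
        1 * ∑ i ∈ Finset.range (j + 1),
          (j.choose i : ℝ) * ((k.factorial : ℝ) * (k+1)^(i+1) * L^(k+1)) * L :=
      hB.trans (mul_le_mul ContinuousLinearMap.norm_id_le hsumle hS0 zero_le_one)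
    have hsum : ∑ i ∈ Finset.range (j + 1), (j.choose i : ℝ) * (k+1)^i = ((k:ℝ)+2)^j := by
      have h5 := add_pow ((k:ℝ)+1) 1 j
      simp only [one_pow, mul_one] at h5
      rw [show ((k:ℝ)+2) = ((k:ℝ)+1)+1 by ring, h5]
      exact Finset.sum_congr rfl fun i _ => by ring
    have hre : ∑ i ∈ Finset.range (j + 1),
        (j.choose i : ℝ) * ((k.factorial : ℝ) * (k+1)^(i+1) * L^(k+1)) * L
        = ((k.factorial : ℝ) * (k+1) * L^(k+2)) *
          ∑ i ∈ Finset.range (j + 1), (j.choose i : ℝ) * (k+1)^i := by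
      rw [Finset.mul_sum]
      exact Finset.sum_congr rfl fun i _ => by ring
    rw [hre, hsum, one_mul] at hmain
    refine hmain.trans (le_of_eq ?_)
    rw [Nat.factorial_succ]
    push_cast
    ring

/-- Corollary `coro:trajSmooth`.
Let `f : ℝ^d → ℝ^d` be `β`-times continuously differentiable with
`‖D^k f‖_op ≤ L_k` for `k ∈ {0,…,β}` and set `L := max_k L_k`.  Then any solution
`u = U(f, x₀, ·)` of `u̇ = f(u)`, `u 0 = x₀` is `(β+1)`-times continuously
differentiable with `‖D^k u(t)‖ ≤ (k−1)!·L^k` for all `k ∈ {1,…,β+1}` and `t ∈ ℝ`. -/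
theorem stmt6 (d β : ℕ) (hβ : 1 ≤ β) (Lc : ℕ → ℝ) (hLc : ∀ k ≤ β, 0 < Lc k)
    (f : EuclideanSpace ℝ (Fin d) → EuclideanSpace ℝ (Fin d))
    (hf : ContDiff ℝ (β : ℕ∞) f)
    (hbound : ∀ k ≤ β, ∀ x, ‖iteratedFDeriv ℝ k f x‖ ≤ Lc k)
    (x₀ : EuclideanSpace ℝ (Fin d)) (u : ℝ → EuclideanSpace ℝ (Fin d))
    (hu0 : u 0 = x₀) (hu : ∀ t, HasDerivAt u (f (u t)) t) :
    ContDiff ℝ ((β : ℕ∞) + 1) u ∧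
    ∀ k, 1 ≤ k → k ≤ β + 1 → ∀ t,
      ‖iteratedFDeriv ℝ k u t‖ ≤
        (Nat.factorial (k - 1) : ℝ) *
          ((Finset.range (β + 1)).sup' (by simp) Lc) ^ k := by
  set L : ℝ := (Finset.range (β + 1)).sup' (by simp) Lc with hL
  have hLle : ∀ k, k ≤ β → Lc k ≤ L := fun k hk =>
    Finset.le_sup' Lc (Finset.mem_range.mpr (by omega))
  have hL0 : 0 ≤ L := le_trans (hLc 0 (by omega)).le (hLle 0 (by omega))
  have hfL : ∀ j, j ≤ β → ∀ x, ‖iteratedFDeriv ℝ j f x‖ ≤ L := fun j hj x =>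
    (hbound j hj x).trans (hLle j hj)
  have hdiff : Differentiable ℝ u := fun t => (hu t).differentiableAt
  have hderiv : deriv u = f ∘ u := funext fun t => (hu t).deriv
  have hsm : ∀ n, n ≤ β → ContDiff ℝ ((n : WithTop ℕ∞) + 1) u := by
    intro n
    induction n with
    | zero =>
      intro _
      rw [show ((0 : ℕ) : WithTop ℕ∞) + 1 = 1 by norm_num, contDiff_one_iff_deriv]
      exact ⟨hdiff, by rw [hderiv]; exact hf.continuous.comp hdiff.continuous⟩
    | succ n ihn =>
      intro hn
      rw [show (((n+1 : ℕ)) : WithTop ℕ∞) + 1 = ((n : WithTop ℕ∞) + 1) + 1 by push_cast; ring,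
        contDiff_succ_iff_deriv]
      refine ⟨hdiff, by simp, ?_⟩
      rw [hderiv]
      have hfn : ContDiff ℝ ((n : WithTop ℕ∞) + 1) f := by
        apply hf.of_le
        exact_mod_cast (by exact_mod_cast (by omega : n + 1 ≤ β))
      exact hfn.comp (ihn (by omega))
  constructor
  · have := hsm β le_rfl
    exact_mod_cast this
  have hiter : ∀ k, k ≤ β → ∀ t, iteratedDeriv (k+1) u t = Hseq f k (u t) := by
    intro k
    induction k with
    | zero =>
      intro _ t
      rw [iteratedDeriv_one, hderiv]
      rfl
    | succ k ih =>
      intro hk t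
      have hk' : k ≤ β := by omega
      have hcomp : iteratedDeriv (k+1) u = (Hseq f k) ∘ u := funext fun s => ih hk' s
      rw [iteratedDeriv_succ, hcomp]
      have hdHk : DifferentiableAt ℝ (Hseq f k) (u t) := by
        have h1 := Hseq_contDiff hf k hk'
        have h2 : (1 : WithTop ℕ∞) ≤ ((β - k : ℕ) : ℕ∞) := by
          exact_mod_cast (by exact_mod_cast (by omega : 1 ≤ β - k))
        exact (h1.differentiable (zero_lt_one.trans_le h2).ne').differentiableAt
      have := (hdHk.hasFDerivAt).comp_hasDerivAt t (hu t)
      rw [this.deriv]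
      rfl
  intro k hk1 hk2 t
  obtain ⟨m, rfl⟩ : ∃ m, k = m + 1 := ⟨k - 1, by omega⟩
  have hmβ : m ≤ β := by omega
  rw [norm_iteratedFDeriv_eq_norm_iteratedDeriv, hiter m hmβ t]
  have hb := Hseq_bound hf hL0 hfL m 0 (by omega) (u t)
  rw [norm_iteratedFDeriv_zero] at hb
  simpa using hb
end

section
/- Let d ∈ ℕ and L₁ > 0. Let f : ℝ^d → ℝ^d be continuously differentiable with sup_x ‖Df(x)‖_op ≤ L₁. Then for all t ≥ 0: sup_{x∈ℝ^d} ‖D_x U(f, x, t)‖_op ≤ exp(L₁ t) and sup_{x∈ℝ^d} ‖D_x Υ(f, t, x)‖_op ≤ exp(L₁ t) − 1, where D_x denotes the derivative with respect to the initial condition x. -/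
open Real Set MeasureTheory Filter Topology intervalIntegral
open scoped Interval

namespace Stmt7Aux

variable {E : Type*} [NormedAddCommGroup E] [NormedSpace ℝ E] [CompleteSpace E]

noncomputable def picard (A : ℝ → (E →L[ℝ] E)) : ℕ → ℝ → (E →L[ℝ] E)
  | 0 => fun _ => 1
  | (n + 1) => fun s => 1 + ∫ r in (0:ℝ)..s, A r ∘L picard A n r

lemma picard_zero (A : ℝ → (E →L[ℝ] E)) (s : ℝ) : picard A 0 s = 1 := rfl

lemma picard_succ (A : ℝ → (E →L[ℝ] E)) (n : ℕ) (s : ℝ) :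
    picard A (n + 1) s = 1 + ∫ r in (0:ℝ)..s, A r ∘L picard A n r := rfl

variable {L : ℝ} {A : ℝ → (E →L[ℝ] E)}

lemma picard_cont (hA : Continuous A) (n : ℕ) : Continuous (picard A n) := by
  induction n with
  | zero => exact continuous_const
  | succ n ih =>
    have h1 : Continuous fun r => A r ∘L picard A n r := hA.clm_comp ih
    exact continuous_const.add
      (intervalIntegral.continuous_primitive (fun a b => h1.intervalIntegrable a b) 0)

lemma picard_bnd (hL : 0 ≤ L) (hA : Continuous A) (hAn : ∀ s, ‖A s‖ ≤ L) (n : ℕ) :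
    ∀ s, 0 ≤ s → ‖picard A (n + 1) s - picard A n s‖
      ≤ (L * s) ^ (n + 1) / ((n + 1).factorial : ℝ) := by
  have contInt : ∀ n (a b : ℝ), IntervalIntegrable (fun r => A r ∘L picard A n r) volume a b :=
    fun n a b => (hA.clm_comp (picard_cont hA n)).intervalIntegrable a b
  induction n with
  | zero =>
    intro s hs
    have h0 : picard A (0 + 1) s - picard A 0 s = ∫ r in (0:ℝ)..s, A r := by
      simp only [picard_succ, picard_zero, ContinuousLinearMap.one_def,
        ContinuousLinearMap.comp_id]
      abel
    rw [h0]
    have := intervalIntegral.norm_integral_le_of_norm_le_const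
      (C := L) (f := A) (a := (0:ℝ)) (b := s) (fun r _ => hAn r)
    simpa [abs_of_nonneg hs] using this
  | succ n ih =>
    intro s hs
    have hsub : picard A (n + 1 + 1) s - picard A (n + 1) s
        = ∫ r in (0:ℝ)..s, A r ∘L (picard A (n + 1) r - picard A n r) := by
      rw [picard_succ A (n + 1) s, picard_succ A n s, add_sub_add_left_eq_sub,
        ← intervalIntegral.integral_sub (contInt (n + 1) 0 s) (contInt n 0 s)]
      congr 1
      ext1 r
      simp [ContinuousLinearMap.comp_sub]
    rw [hsub]
    have hcpos : (0:ℝ) < ((n + 1).factorial : ℝ) := by positivity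
    have hmaj : ‖∫ r in (0:ℝ)..s, A r ∘L (picard A (n + 1) r - picard A n r)‖
        ≤ |∫ r in (0:ℝ)..s, L * ((L * r) ^ (n + 1) / ((n + 1).factorial : ℝ))| := by
      apply intervalIntegral.norm_integral_le_abs_of_norm_le
      · have h1 : ∀ᵐ r ∂(volume.restrict (Ι (0:ℝ) s)), r ∈ Ι (0:ℝ) s :=
          ae_restrict_mem measurableSet_uIoc
        filter_upwards [h1] with r hr
        rw [uIoc_of_le hs] at hr
        have hr0 : (0:ℝ) ≤ r := hr.1.le
        calc ‖A r ∘L (picard A (n + 1) r - picard A n r)‖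
            ≤ ‖A r‖ * ‖picard A (n + 1) r - picard A n r‖ :=
              ContinuousLinearMap.opNorm_comp_le _ _
          _ ≤ L * ((L * r) ^ (n + 1) / ((n + 1).factorial : ℝ)) :=
              mul_le_mul (hAn r) (ih r hr0) (norm_nonneg _) hL
      · exact Continuous.intervalIntegrable (by fun_prop) 0 s
    have hcomp : (∫ r in (0:ℝ)..s, L * ((L * r) ^ (n + 1) / ((n + 1).factorial : ℝ)))
        = (L * s) ^ (n + 2) / ((n + 2).factorial : ℝ) := by
      have hg : ∀ r : ℝ, L * ((L * r) ^ (n + 1) / ((n + 1).factorial : ℝ))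
          = (L ^ (n + 2) / ((n + 1).factorial : ℝ)) * r ^ (n + 1) := by
        intro r; rw [mul_pow]; ring
      simp_rw [hg]
      rw [intervalIntegral.integral_const_mul, integral_pow]
      have hfac : ((n + 2).factorial : ℝ) = (n + 2) * ((n + 1).factorial : ℝ) := by
        push_cast [Nat.factorial_succ]; ring
      rw [hfac, mul_pow, zero_pow (by omega : n + 1 + 1 ≠ 0)]
      push_cast
      field_simp
      ring
    rw [hcomp] at hmaj
    calc ‖∫ r in (0:ℝ)..s, A r ∘L (picard A (n + 1) r - picard A n r)‖
        ≤ |(L * s) ^ (n + 2) / ((n + 2).factorial : ℝ)| := hmaj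
      _ = (L * s) ^ (n + 2) / ((n + 2).factorial : ℝ) := by
          rw [abs_of_nonneg]; positivity

end Stmt7Aux

namespace Stmt7Aux

variable {E : Type*} [NormedAddCommGroup E] [NormedSpace ℝ E] [CompleteSpace E]
variable {L : ℝ} {A : ℝ → (E →L[ℝ] E)}

lemma picard_at_zero (A : ℝ → (E →L[ℝ] E)) (n : ℕ) : picard A n 0 = 1 := by
  cases n with
  | zero => rfl
  | succ n => rw [picard_succ, intervalIntegral.integral_same, add_zero]

set_option maxHeartbeats 1000000 in
theorem exists_sol (hL : 0 ≤ L) (hA : Continuous A) (hAn : ∀ s, ‖A s‖ ≤ L) :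
    ∃ v : ℝ → (E →L[ℝ] E), v 0 = 1 ∧ ContinuousOn v (Ici 0) ∧
      ∀ s, 0 ≤ s → v s = 1 + ∫ r in (0:ℝ)..s, A r ∘L v r := by
  have hD : ∀ T : ℝ, Summable (fun k => (L * T) ^ (k + 1) / ((k + 1).factorial : ℝ)) := by
    intro T
    exact (summable_nat_add_iff 1).2 (Real.summable_pow_div_factorial (L * T))
  have hdist : ∀ s : ℝ, 0 ≤ s → ∀ n,
      dist (picard A n s) (picard A (n + 1) s)
        ≤ (L * s) ^ (n + 1) / ((n + 1).factorial : ℝ) := by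
    intro s hs n
    rw [dist_eq_norm, norm_sub_rev]
    exact picard_bnd hL hA hAn n s hs
  have hcauchy : ∀ s : ℝ, 0 ≤ s → CauchySeq (fun n => picard A n s) := fun s hs =>
    cauchySeq_of_dist_le_of_summable _ (hdist s hs) (hD s)
  set v : ℝ → (E →L[ℝ] E) := fun s => limUnder atTop (fun n => picard A n s) with hv
  have hvt : ∀ s : ℝ, 0 ≤ s → Tendsto (fun n => picard A n s) atTop (𝓝 (v s)) :=
    fun s hs => (hcauchy s hs).tendsto_limUnder
  have htail : ∀ T : ℝ, 0 ≤ T → ∀ n : ℕ, ∀ s ∈ Icc (0:ℝ) T,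
      ‖picard A n s - v s‖ ≤ ∑' m, (L * T) ^ (n + m + 1) / ((n + m + 1).factorial : ℝ) := by
    intro T hT n s hs
    have hd : ∀ k, dist (picard A k s) (picard A (k + 1) s)
        ≤ (L * T) ^ (k + 1) / ((k + 1).factorial : ℝ) := by
      intro k
      refine (hdist s hs.1 k).trans ?_
      gcongr
      · exact mul_nonneg hL hs.1
      · exact hs.2
    have h := dist_le_tsum_of_dist_le_of_tendsto _ hd (hD T) (hvt s hs.1) n
    rw [dist_eq_norm] at h
    exact h
  have htail0 : ∀ T : ℝ, Tendsto
      (fun n => ∑' m, (L * T) ^ (n + m + 1) / ((n + m + 1).factorial : ℝ)) atTop (𝓝 0) := by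
    intro T
    have h := tendsto_sum_nat_add (f := fun k => (L * T) ^ (k + 1) / ((k + 1).factorial : ℝ))
    exact h.congr fun n => tsum_congr fun m => by rw [add_comm m n]
  have hv0 : v 0 = 1 := by
    refine tendsto_nhds_unique (hvt 0 le_rfl) ?_
    simpa [picard_at_zero] using (tendsto_const_nhds : Tendsto (fun _ : ℕ => (1 : E →L[ℝ] E)) atTop _)
  have hvc : ContinuousOn v (Ici 0) := by
    intro s₀ hs₀
    have hs₀' : (0:ℝ) ≤ s₀ := hs₀
    have hT : (0:ℝ) ≤ s₀ + 1 := by linarith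
    have hTU : TendstoUniformlyOn (fun n s => picard A n s) v atTop (Icc 0 (s₀ + 1)) := by
      rw [Metric.tendstoUniformlyOn_iff]
      intro ε hε
      filter_upwards [Metric.tendsto_nhds.mp (htail0 (s₀ + 1)) ε hε] with n hn s hs
      rw [dist_eq_norm']
      refine lt_of_le_of_lt ((htail (s₀ + 1) hT n s hs).trans (le_abs_self _)) ?_
      simpa [Real.dist_eq] using hn
    have hcont : ContinuousOn v (Icc 0 (s₀ + 1)) :=
      hTU.continuousOn (Filter.Eventually.of_forall fun n => (picard_cont hA n).continuousOn).frequently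
    have hmem : Icc (0:ℝ) (s₀ + 1) ∈ 𝓝[Ici 0] s₀ := by
      refine mem_nhdsWithin.2 ⟨Iio (s₀ + 1), isOpen_Iio, by simp, ?_⟩
      rintro u ⟨hu1, hu2⟩
      exact ⟨hu2, hu1.le⟩
    exact (hcont.continuousWithinAt ⟨hs₀', by linarith⟩).mono_of_mem_nhdsWithin hmem
  refine ⟨v, hv0, hvc, ?_⟩
  intro s hs
  have hvcIcc : ContinuousOn v (Icc 0 s) := hvc.mono Icc_subset_Ici_self
  have hgc : ContinuousOn (fun r => A r ∘L v r) (Icc 0 s) := hA.continuousOn.clm_comp hvcIcc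
  have hgint : IntervalIntegrable (fun r => A r ∘L v r) volume 0 s := by
    apply ContinuousOn.intervalIntegrable
    rwa [uIcc_of_le hs]
  have key : ∀ n : ℕ,
      ‖v s - (1 + ∫ r in (0:ℝ)..s, A r ∘L v r)‖
        ≤ (∑' m, (L * s) ^ (n + 1 + m + 1) / ((n + 1 + m + 1).factorial : ℝ))
          + L * (∑' m, (L * s) ^ (n + m + 1) / ((n + m + 1).factorial : ℝ)) * s := by
    intro n
    have h1 : ‖v s - picard A (n + 1) s‖
        ≤ ∑' m, (L * s) ^ (n + 1 + m + 1) / ((n + 1 + m + 1).factorial : ℝ) := by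
      rw [norm_sub_rev]
      exact htail s hs (n + 1) s ⟨hs, le_rfl⟩
    have h2 : picard A (n + 1) s - (1 + ∫ r in (0:ℝ)..s, A r ∘L v r)
        = ∫ r in (0:ℝ)..s, A r ∘L (picard A n r - v r) := by
      rw [picard_succ, add_sub_add_left_eq_sub,
        ← intervalIntegral.integral_sub
          ((hA.clm_comp (picard_cont hA n)).intervalIntegrable 0 s) hgint]
      congr 1
      ext1 r
      simp [ContinuousLinearMap.comp_sub]
    have h3 : ‖picard A (n + 1) s - (1 + ∫ r in (0:ℝ)..s, A r ∘L v r)‖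
        ≤ L * (∑' m, (L * s) ^ (n + m + 1) / ((n + m + 1).factorial : ℝ)) * s := by
      rw [h2]
      have hb : ∀ r ∈ Ι (0:ℝ) s, ‖A r ∘L (picard A n r - v r)‖
          ≤ L * (∑' m, (L * s) ^ (n + m + 1) / ((n + m + 1).factorial : ℝ)) := by
        intro r hr
        rw [uIoc_of_le hs] at hr
        calc ‖A r ∘L (picard A n r - v r)‖
            ≤ ‖A r‖ * ‖picard A n r - v r‖ := ContinuousLinearMap.opNorm_comp_le _ _
          _ ≤ L * (∑' m, (L * s) ^ (n + m + 1) / ((n + m + 1).factorial : ℝ)) :=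
              mul_le_mul (hAn r) (htail s hs n r ⟨hr.1.le, hr.2⟩) (norm_nonneg _) hL
      have hc := intervalIntegral.norm_integral_le_of_norm_le_const hb
      rw [sub_zero, abs_of_nonneg hs] at hc
      exact hc
    calc ‖v s - (1 + ∫ r in (0:ℝ)..s, A r ∘L v r)‖
        ≤ ‖v s - picard A (n + 1) s‖
          + ‖picard A (n + 1) s - (1 + ∫ r in (0:ℝ)..s, A r ∘L v r)‖ := by
          exact norm_sub_le_norm_sub_add_norm_sub _ _ _
      _ ≤ _ := add_le_add h1 h3
  have hlim : Tendsto (fun n : ℕ =>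
      (∑' m, (L * s) ^ (n + 1 + m + 1) / ((n + 1 + m + 1).factorial : ℝ))
        + L * (∑' m, (L * s) ^ (n + m + 1) / ((n + m + 1).factorial : ℝ)) * s)
      atTop (𝓝 0) := by
    have h1 := (htail0 s).comp (tendsto_add_atTop_nat 1)
    have h2 := htail0 s
    have := (h1.add ((h2.const_mul L).mul_const s))
    simpa using this
  have hX : ‖v s - (1 + ∫ r in (0:ℝ)..s, A r ∘L v r)‖ ≤ 0 :=
    ge_of_tendsto hlim (Filter.Eventually.of_forall key)
  have := norm_le_zero_iff.1 hX
  rw [sub_eq_zero] at this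
  exact this

end Stmt7Aux

namespace Stmt7Aux

set_option maxHeartbeats 1000000 in
theorem key {E : Type*} [NormedAddCommGroup E] [NormedSpace ℝ E] [ProperSpace E]
    [CompleteSpace E] {L₁ : ℝ} (hL₁ : 0 < L₁) {f : E → E}
    (hf : ContDiff ℝ 1 f) (hf1 : ∀ x, ‖fderiv ℝ f x‖ ≤ L₁)
    {U : E → ℝ → E} (hU0 : ∀ x, U x 0 = x) (hU : ∀ x t, HasDerivAt (U x) (f (U x t)) t)
    {t : ℝ} (ht : 0 ≤ t) (x : E) :
    ∃ φ : E →L[ℝ] E, HasFDerivAt (fun y => U y t) φ x ∧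
      ‖φ‖ ≤ Real.exp (L₁ * t) ∧ ‖φ - 1‖ ≤ Real.exp (L₁ * t) - 1 := by
  have hfd : Differentiable ℝ f := hf.differentiable one_ne_zero
  have hUcont : ∀ y, Continuous (U y) :=
    fun y => continuous_iff_continuousAt.2 fun s => (hU y s).continuousAt
  have hDfc : Continuous (fderiv ℝ f) := hf.continuous_fderiv one_ne_zero
  set A : ℝ → E →L[ℝ] E := fun s => fderiv ℝ f (U x s) with hA_def
  have hAc : Continuous A := hDfc.comp (hUcont x)
  have hAn : ∀ s, ‖A s‖ ≤ L₁ := fun s => hf1 _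
  obtain ⟨hv0, hvc, hvint⟩ := Classical.choose_spec (exists_sol hL₁.le hAc hAn)
  set v := Classical.choose (exists_sol hL₁.le hAc hAn) with hv_def
  -- continuity of the integrand of the variational equation
  have hgc : ContinuousOn (fun r => A r ∘L v r) (Ici 0) := hAc.continuousOn.clm_comp hvc
  -- derivative of `v`
  have hv' : ∀ s, 0 ≤ s → HasDerivWithinAt v (A s ∘L v s) (Ici s) s := by
    intro s hs
    have hIci : Ioi s ⊆ Ici (0:ℝ) := fun r hr => le_trans hs (le_of_lt hr)
    have hint : IntervalIntegrable (fun r => A r ∘L v r) volume 0 s := by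
      apply ContinuousOn.intervalIntegrable
      rw [uIcc_of_le hs]
      exact hgc.mono Icc_subset_Ici_self
    have hmeas : StronglyMeasurableAtFilter (fun r => A r ∘L v r) (𝓝[Ioi s] s) volume :=
      ⟨Ici 0, mem_of_superset self_mem_nhdsWithin hIci,
        hgc.aestronglyMeasurable measurableSet_Ici⟩
    have hcw : ContinuousWithinAt (fun r => A r ∘L v r) (Ioi s) s :=
      (hgc s hs).mono hIci
    have hd := intervalIntegral.integral_hasDerivWithinAt_right (s := Ici s) (t := Ioi s) hint hmeas hcw
    have hd' : HasDerivWithinAt (fun u => 1 + ∫ r in (0:ℝ)..u, A r ∘L v r)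
        (A s ∘L v s) (Ici s) s := hd.const_add 1
    exact hd'.congr (fun u hu => hvint u (le_trans hs hu)) (hvint s hs)
  -- Grönwall bound for `v`
  have hvn : ∀ s ∈ Icc 0 t, ‖v s‖ ≤ Real.exp (L₁ * s) := by
    intro s hs
    have h := norm_le_gronwallBound_of_norm_deriv_right_le (f := v)
      (f' := fun s => A s ∘L v s) (δ := 1) (K := L₁) (ε := 0) (a := 0) (b := t)
      (hvc.mono Icc_subset_Ici_self) (fun r hr => hv' r hr.1)
      (by rw [hv0, ContinuousLinearMap.one_def]; exact ContinuousLinearMap.norm_id_le)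
      (fun r hr => by
        rw [add_zero]
        calc ‖A r ∘L v r‖ ≤ ‖A r‖ * ‖v r‖ := ContinuousLinearMap.opNorm_comp_le _ _
          _ ≤ L₁ * ‖v r‖ := mul_le_mul_of_nonneg_right (hAn r) (norm_nonneg _))
    have := h s hs
    rwa [gronwallBound_ε0, sub_zero, one_mul] at this
  -- bound for `v t - 1`
  have hv1 : ‖v t - 1‖ ≤ Real.exp (L₁ * t) - 1 := by
    have hsub : v t - 1 = ∫ r in (0:ℝ)..t, A r ∘L v r := by
      rw [hvint t ht]; abel
    have hmajint : IntervalIntegrable (fun r => Real.exp (L₁ * r) * L₁) volume 0 t :=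
      (Continuous.intervalIntegrable (by fun_prop) 0 t)
    have hb : ‖∫ r in (0:ℝ)..t, A r ∘L v r‖ ≤ |∫ r in (0:ℝ)..t, Real.exp (L₁ * r) * L₁| := by
      apply intervalIntegral.norm_integral_le_abs_of_norm_le _ hmajint
      have h1 : ∀ᵐ r ∂(volume.restrict (Ι (0:ℝ) t)), r ∈ Ι (0:ℝ) t :=
        ae_restrict_mem measurableSet_uIoc
      filter_upwards [h1] with r hr
      rw [uIoc_of_le ht] at hr
      calc ‖A r ∘L v r‖ ≤ ‖A r‖ * ‖v r‖ := ContinuousLinearMap.opNorm_comp_le _ _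
        _ ≤ L₁ * Real.exp (L₁ * r) :=
            mul_le_mul (hAn r) (hvn r ⟨hr.1.le, hr.2⟩) (norm_nonneg _) hL₁.le
        _ = Real.exp (L₁ * r) * L₁ := mul_comm _ _
    have hcomp : (∫ r in (0:ℝ)..t, Real.exp (L₁ * r) * L₁) = Real.exp (L₁ * t) - 1 := by
      have hder : ∀ r ∈ uIcc (0:ℝ) t, HasDerivAt (fun u => Real.exp (L₁ * u))
          (Real.exp (L₁ * r) * L₁) r := by
        intro r _
        simpa using ((hasDerivAt_id r).const_mul L₁).exp
      rw [intervalIntegral.integral_eq_sub_of_hasDerivAt hder hmajint]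
      simp
    rw [hsub]
    refine hb.trans ?_
    rw [hcomp, abs_of_nonneg]
    have : (1:ℝ) ≤ Real.exp (L₁ * t) := Real.one_le_exp (by positivity)
    linarith
  -- Lipschitz bound for the flow
  have hlipf : LipschitzWith L₁.toNNReal f := by
    apply lipschitzWith_of_nnnorm_fderiv_le hfd
    intro z
    rw [← NNReal.coe_le_coe, coe_nnnorm, Real.coe_toNNReal _ hL₁.le]
    exact hf1 z
  have hflow : ∀ y, ∀ s ∈ Icc 0 t, ‖U y s - U x s‖ ≤ ‖y - x‖ * Real.exp (L₁ * s) := by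
    intro y s hs
    have h := dist_le_of_trajectories_ODE (v := fun _ z => f z) (K := L₁.toNNReal)
      (fun _ => hlipf) ((hUcont y).continuousOn) (fun r _ => (hU y r).hasDerivWithinAt)
      ((hUcont x).continuousOn) (fun r _ => (hU x r).hasDerivWithinAt)
      (le_refl (dist (U y 0) (U x 0))) s hs
    rw [hU0, hU0, dist_eq_norm, dist_eq_norm, sub_zero, Real.coe_toNNReal _ hL₁.le] at h
    exact h
  -- uniform continuity of the derivative near the trajectory
  have hKcomp : IsCompact (U x '' Icc 0 t) := (isCompact_Icc).image (hUcont x)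
  have hK'comp : IsCompact (Metric.cthickening 1 (U x '' Icc 0 t)) := hKcomp.cthickening
  have hunif := hK'comp.uniformContinuousOn_of_continuous hDfc.continuousOn
  have hR : ∀ ε > (0:ℝ), ∃ δ > (0:ℝ), ∀ a ∈ U x '' Icc 0 t, ∀ b : E, ‖b - a‖ ≤ δ →
      ‖f b - f a - fderiv ℝ f a (b - a)‖ ≤ ε * ‖b - a‖ := by
    intro ε hε
    obtain ⟨δ₀, hδ₀, hδ⟩ := Metric.uniformContinuousOn_iff.1 hunif ε hε
    refine ⟨min (δ₀ / 2) 1, by positivity, fun a ha b hb => ?_⟩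
    have hbound : ∀ c ∈ Metric.closedBall a (min (δ₀ / 2) 1),
        ‖fderiv ℝ f c - fderiv ℝ f a‖ ≤ ε := by
      intro c hc
      have hdist : dist c a ≤ min (δ₀ / 2) 1 := Metric.mem_closedBall.1 hc
      have hcK' : c ∈ Metric.cthickening 1 (U x '' Icc 0 t) :=
        Metric.mem_cthickening_of_dist_le c a 1 _ ha (hdist.trans (min_le_right _ _))
      have haK' : a ∈ Metric.cthickening 1 (U x '' Icc 0 t) :=
        Metric.self_subset_cthickening _ ha
      have := hδ c hcK' a haK'
        (lt_of_le_of_lt (hdist.trans (min_le_left _ _)) (by linarith))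
      rw [dist_eq_norm] at this
      exact this.le
    have hmem_a : a ∈ Metric.closedBall a (min (δ₀ / 2) 1) :=
      Metric.mem_closedBall_self (by positivity)
    have hmem_b : b ∈ Metric.closedBall a (min (δ₀ / 2) 1) := by
      rw [Metric.mem_closedBall, dist_eq_norm]; exact hb
    exact (convex_closedBall a (min (δ₀ / 2) 1)).norm_image_sub_le_of_norm_hasFDerivWithin_le'
      (fun c _ => (hfd c).hasFDerivAt.hasFDerivWithinAt) hbound hmem_a hmem_b
  -- the candidate derivative is `v t`
  refine ⟨v t, ?_, by simpa using hvn t ⟨ht, le_rfl⟩, hv1⟩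
  rw [hasFDerivAt_iff_isLittleO]
  rw [Asymptotics.isLittleO_iff]
  intro c hc
  set e := Real.exp (L₁ * t) with he_def
  have he1 : (1:ℝ) ≤ e := Real.one_le_exp (by positivity)
  have he0 : (0:ℝ) < e := lt_of_lt_of_le one_pos he1
  set ε := c * L₁ / (e * e) with hε_def
  have hε : 0 < ε := by positivity
  obtain ⟨δ, hδ, hRδ⟩ := hR ε hε
  have hr0 : (0:ℝ) < δ / e := by positivity
  filter_upwards [Metric.ball_mem_nhds x hr0] with y hy
  rw [Metric.mem_ball, dist_eq_norm] at hy
  -- the comparison function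
  set w : ℝ → E := fun s => U y s - U x s - v s (y - x) with hw_def
  have hwc : ContinuousOn w (Icc 0 t) := by
    apply ContinuousOn.sub (((hUcont y).sub (hUcont x)).continuousOn)
    exact (hvc.mono Icc_subset_Ici_self).clm_apply continuousOn_const
  have hw0 : w 0 = 0 := by
    simp [hw_def, hU0, hv0]
  have hw' : ∀ s ∈ Ico 0 t, HasDerivWithinAt w
      (f (U y s) - f (U x s) - (A s ∘L v s) (y - x)) (Ici s) s := by
    intro s hs
    have h1 : HasDerivWithinAt (fun u => U y u - U x u) (f (U y s) - f (U x s)) (Ici s) s :=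
      ((hU y s).sub (hU x s)).hasDerivWithinAt
    have h2 := (hv' s hs.1).clm_apply (hasDerivWithinAt_const s (Ici s) (y - x))
    convert h1.sub h2 using 1 <;> simp [hw_def] <;> rfl
  have hwb : ∀ s ∈ Ico 0 t, ‖f (U y s) - f (U x s) - (A s ∘L v s) (y - x)‖
      ≤ L₁ * ‖w s‖ + ε * e * ‖y - x‖ := by
    intro s hs
    have hsIcc : s ∈ Icc 0 t := ⟨hs.1, hs.2.le⟩
    have hexp : Real.exp (L₁ * s) ≤ e :=
      Real.exp_le_exp.2 (mul_le_mul_of_nonneg_left hs.2.le hL₁.le)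
    have hflows : ‖U y s - U x s‖ ≤ ‖y - x‖ * e :=
      (hflow y s hsIcc).trans (mul_le_mul_of_nonneg_left hexp (norm_nonneg _))
    have hsmall : ‖U y s - U x s‖ ≤ δ := by
      refine hflows.trans ?_
      calc ‖y - x‖ * e ≤ (δ / e) * e :=
            mul_le_mul_of_nonneg_right hy.le he0.le
        _ = δ := by field_simp
    have hrem := hRδ (U x s) ⟨s, hsIcc, rfl⟩ (U y s) hsmall
    have keyeq : f (U y s) - f (U x s) - (A s ∘L v s) (y - x)
        = A s (w s) + (f (U y s) - f (U x s) - A s (U y s - U x s)) := by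
      simp only [hw_def, map_sub, ContinuousLinearMap.coe_comp', Function.comp_apply]
      abel
    rw [keyeq]
    calc ‖A s (w s) + (f (U y s) - f (U x s) - A s (U y s - U x s))‖
        ≤ ‖A s (w s)‖ + ‖f (U y s) - f (U x s) - A s (U y s - U x s)‖ := norm_add_le _ _
      _ ≤ L₁ * ‖w s‖ + ε * (‖y - x‖ * e) := by
          apply add_le_add
          · calc ‖A s (w s)‖ ≤ ‖A s‖ * ‖w s‖ := (A s).le_opNorm _
              _ ≤ L₁ * ‖w s‖ := mul_le_mul_of_nonneg_right (hAn s) (norm_nonneg _)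
          · exact hrem.trans (mul_le_mul_of_nonneg_left hflows hε.le)
      _ = L₁ * ‖w s‖ + ε * e * ‖y - x‖ := by ring
  have hgr := norm_le_gronwallBound_of_norm_deriv_right_le (δ := 0) (K := L₁)
    (ε := ε * e * ‖y - x‖) hwc hw' (by simp [hw0]) hwb t ⟨ht, le_rfl⟩
  rw [gronwallBound_of_K_ne_0 hL₁.ne'] at hgr
  have hgr' : ‖w t‖ ≤ 0 * Real.exp (L₁ * t)
      + ε * e * ‖y - x‖ / L₁ * (Real.exp (L₁ * t) - 1) := by simpa using hgr
  -- final arithmetic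
  have hfinal : (0:ℝ) * Real.exp (L₁ * t)
      + ε * e * ‖y - x‖ / L₁ * (Real.exp (L₁ * t) - 1) ≤ c * ‖y - x‖ := by
    rw [← he_def, zero_mul, zero_add, hε_def]
    have hyx : (0:ℝ) ≤ ‖y - x‖ := norm_nonneg _
    have step : c * L₁ / (e * e) * e * ‖y - x‖ / L₁ * (e - 1)
        = c * ‖y - x‖ * ((e - 1) / e) := by
      field_simp
    rw [step]
    have hle : (e - 1) / e ≤ 1 := by
      rw [div_le_one he0]; linarith
    calc c * ‖y - x‖ * ((e - 1) / e) ≤ c * ‖y - x‖ * 1 := by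
          apply mul_le_mul_of_nonneg_left hle (by positivity)
      _ = c * ‖y - x‖ := mul_one _
  calc ‖U y t - U x t - (v t) (y - x)‖ = ‖w t‖ := rfl
    _ ≤ _ := hgr'
    _ ≤ c * ‖y - x‖ := hfinal

end Stmt7Aux

/-- Lemma `lmm:derivIncrem`.
Let `f : ℝ^d → ℝ^d` be continuously differentiable with `‖Df(x)‖_op ≤ L₁` for all `x`,
and let `U` be the flow of `u̇ = f(u)`.  Then for all `t ≥ 0`, the derivative with
respect to the initial condition satisfies `‖D_x U(f, x, t)‖_op ≤ exp(L₁ t)` and the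
derivative of the increment map `Υ(f, t, x) = U(f, x, t) − x` satisfies
`‖D_x Υ(f, t, x)‖_op ≤ exp(L₁ t) − 1`, for all `x`. -/
theorem stmt7 (d : ℕ) (L₁ : ℝ) (hL₁ : 0 < L₁)
    (f : EuclideanSpace ℝ (Fin d) → EuclideanSpace ℝ (Fin d))
    (hf : ContDiff ℝ 1 f) (hf1 : ∀ x, ‖fderiv ℝ f x‖ ≤ L₁)
    (U : EuclideanSpace ℝ (Fin d) → ℝ → EuclideanSpace ℝ (Fin d))
    (hU0 : ∀ x, U x 0 = x)
    (hU : ∀ x t, HasDerivAt (U x) (f (U x t)) t) :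
    ∀ t, 0 ≤ t →
      Differentiable ℝ (fun y => U y t) ∧
      (∀ x, ‖fderiv ℝ (fun y => U y t) x‖ ≤ Real.exp (L₁ * t)) ∧
      (∀ x, ‖fderiv ℝ (fun y => U y t - y) x‖ ≤ Real.exp (L₁ * t) - 1) := by
  intro t ht
  have h := fun x => Stmt7Aux.key hL₁ hf hf1 hU0 hU ht x
  refine ⟨fun x => ?_, fun x => ?_, fun x => ?_⟩
  · obtain ⟨φ, hφ, -, -⟩ := h x
    exact hφ.differentiableAt
  · obtain ⟨φ, hφ, hφ1, -⟩ := h x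
    rw [hφ.fderiv]
    exact hφ1
  · obtain ⟨φ, hφ, -, hφ2⟩ := h x
    have hsub : HasFDerivAt (fun y => U y t - y) (φ - 1) x := by
      rw [ContinuousLinearMap.one_def]; exact hφ.sub (hasFDerivAt_id x)
    rw [hsub.fderiv]
    exact hφ2
end

section
/- Let N, d ∈ ℕ and let 𝐱 = (x₁, …, x_N), 𝐳 = (z₁, …, z_N) ∈ (ℝ^d)^N. Assume γ := max_{k≤N} ‖x_k − z_k‖ < (1/2)·diam(𝐱), where diam(𝐱) := max_{i,j} ‖x_i − x_j‖. Then max_{k≤N} ‖η_𝐱(x_k) − η_𝐳(z_k)‖ ≤ 4γ / (diam(𝐱) − 2γ), where for a tuple 𝐰 with diam(𝐰) > 0 the normalization is η_𝐰(x) := (x − (1/N)Σ_{i=1}^N w_i) / diam(𝐰). -/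
/-- The diameter `diam(𝐰) = max_{i,j} ‖w_i − w_j‖` of a tuple of points in `ℝ^d`. -/
noncomputable def tupDiam {ι : Type*} {d : ℕ}
    (w : ι → EuclideanSpace ℝ (Fin d)) : ℝ :=
  ⨆ p : ι × ι, ‖w p.1 - w p.2‖

/-- The normalization map `η_𝐰(y) = (y − (1/N)·Σᵢ wᵢ)/diam(𝐰)` associated to a
tuple `𝐰` of `N` points of `ℝ^d`. -/
noncomputable def normMap {ι : Type*} [Fintype ι] {d : ℕ}
    (w : ι → EuclideanSpace ℝ (Fin d)) (y : EuclideanSpace ℝ (Fin d)) :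
    EuclideanSpace ℝ (Fin d) :=
  (tupDiam w)⁻¹ • (y - (Fintype.card ι : ℝ)⁻¹ • ∑ i, w i)

/-- Lemma `lmm:perturb:norm`, perturbed normalization.
Let `𝐱, 𝐳 ∈ (ℝ^d)^N` with `γ := max_k ‖x_k − z_k‖ < (1/2)·diam(𝐱)`.  Then
`max_k ‖η_𝐱(x_k) − η_𝐳(z_k)‖ ≤ 4γ/(diam(𝐱) − 2γ)`. -/
theorem stmt12 (d N : ℕ) (hN : 0 < N)
    (x z : Fin N → EuclideanSpace ℝ (Fin d)) (γ : ℝ)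
    (hγdef : γ = ⨆ k, ‖x k - z k‖)
    (hγ : γ < (1 / 2) * tupDiam x) :
    ∀ k, ‖normMap x (x k) - normMap z (z k)‖ ≤
      4 * γ / (tupDiam x - 2 * γ) := by
  intro k
  have hNe : Nonempty (Fin N) := ⟨⟨0, hN⟩⟩
  set D := tupDiam x with hD
  set D' := tupDiam z with hD'
  have hbx : BddAbove (Set.range fun p : Fin N × Fin N => ‖x p.1 - x p.2‖) :=
    (Set.finite_range _).bddAbove
  have hbz : BddAbove (Set.range fun p : Fin N × Fin N => ‖z p.1 - z p.2‖) :=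
    (Set.finite_range _).bddAbove
  have hbγ : BddAbove (Set.range fun k => ‖x k - z k‖) :=
    (Set.finite_range _).bddAbove
  have hγle : ∀ i, ‖x i - z i‖ ≤ γ := fun i => hγdef ▸ le_ciSup hbγ i
  have hγ0 : 0 ≤ γ := le_trans (norm_nonneg _) (hγle ⟨0, hN⟩)
  have hD0 : 0 < D := by nlinarith
  have hxle : ∀ i j, ‖x i - x j‖ ≤ D := fun i j => le_ciSup hbx (i, j)
  have hzle : ∀ i j, ‖z i - z j‖ ≤ D' := fun i j => le_ciSup hbz (i, j)
  have key : ∀ (a b : Fin N → EuclideanSpace ℝ (Fin d)),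
      (∀ i, ‖a i - b i‖ ≤ γ) → (∀ i j, ‖b i - b j‖ ≤ tupDiam b) →
      tupDiam a ≤ tupDiam b + 2 * γ := by
    intro a b hab hbb
    apply ciSup_le
    intro p
    have h1 : a p.1 - a p.2 = (a p.1 - b p.1) + (b p.1 - b p.2) + (b p.2 - a p.2) := by
      abel
    calc ‖a p.1 - a p.2‖ ≤ ‖a p.1 - b p.1‖ + ‖b p.1 - b p.2‖ + ‖b p.2 - a p.2‖ := by
          rw [h1]; exact norm_add₃_le
      _ ≤ γ + tupDiam b + γ := by
          gcongr
          · exact hab p.1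
          · exact hbb p.1 p.2
          · rw [norm_sub_rev]; exact hab p.2
      _ = tupDiam b + 2 * γ := by ring
  have hDle : D ≤ D' + 2 * γ := key x z hγle hzle
  have hD'le : D' ≤ D + 2 * γ :=
    key z x (fun i => by rw [norm_sub_rev]; exact hγle i) hxle
  have hD'0 : 0 < D' := by nlinarith
  -- the means
  set xb : EuclideanSpace ℝ (Fin d) := (N : ℝ)⁻¹ • ∑ i, x i with hxb
  set zb : EuclideanSpace ℝ (Fin d) := (N : ℝ)⁻¹ • ∑ i, z i with hzb
  have hNpos : (0 : ℝ) < N := Nat.cast_pos.mpr hN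
  have hmean : ‖xb - zb‖ ≤ γ := by
    have h1 : xb - zb = (N : ℝ)⁻¹ • ∑ i, (x i - z i) := by
      rw [hxb, hzb, ← smul_sub, Finset.sum_sub_distrib]
    rw [h1, norm_smul]
    calc ‖(N : ℝ)⁻¹‖ * ‖∑ i, (x i - z i)‖ ≤ (N : ℝ)⁻¹ * ∑ i, ‖x i - z i‖ := by
          rw [Real.norm_eq_abs, abs_of_nonneg (by positivity)]
          gcongr
          exact norm_sum_le _ _
      _ ≤ (N : ℝ)⁻¹ * ∑ _i : Fin N, γ := by
          gcongr with i _
          exact hγle i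
      _ = γ := by
          rw [Finset.sum_const, Finset.card_univ, Fintype.card_fin, nsmul_eq_mul]
          field_simp
  have hcent : ‖x k - xb‖ ≤ D := by
    have h1 : x k - xb = (N : ℝ)⁻¹ • ∑ i, (x k - x i) := by
      rw [Finset.sum_sub_distrib, Finset.sum_const, Finset.card_univ, Fintype.card_fin,
        smul_sub, hxb]
      congr 1
      rw [← Nat.cast_smul_eq_nsmul ℝ, smul_smul, inv_mul_cancel₀ (ne_of_gt hNpos), one_smul]
    rw [h1, norm_smul]
    calc ‖(N : ℝ)⁻¹‖ * ‖∑ i, (x k - x i)‖ ≤ (N : ℝ)⁻¹ * ∑ i, ‖x k - x i‖ := by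
          rw [Real.norm_eq_abs, abs_of_nonneg (by positivity)]
          gcongr
          exact norm_sum_le _ _
      _ ≤ (N : ℝ)⁻¹ * ∑ _i : Fin N, D := by
          gcongr with i _
          exact hxle k i
      _ ≤ D := by
          rw [Finset.sum_const, Finset.card_univ, Fintype.card_fin, nsmul_eq_mul]
          rw [inv_mul_cancel_left₀ (ne_of_gt hNpos)]
  have hdiff : ‖(x k - xb) - (z k - zb)‖ ≤ 2 * γ := by
    have h1 : (x k - xb) - (z k - zb) = (x k - z k) - (xb - zb) := by abel
    rw [h1]
    calc ‖(x k - z k) - (xb - zb)‖ ≤ ‖x k - z k‖ + ‖xb - zb‖ := norm_sub_le _ _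
      _ ≤ γ + γ := add_le_add (hγle k) hmean
      _ = 2 * γ := by ring
  have hrw : normMap x (x k) - normMap z (z k)
      = (D⁻¹ - D'⁻¹) • (x k - xb) + D'⁻¹ • ((x k - xb) - (z k - zb)) := by
    simp only [normMap, Fintype.card_fin, ← hD, ← hD', ← hxb, ← hzb]
    module
  have habs : |D⁻¹ - D'⁻¹| ≤ 2 * γ / (D * D') := by
    have h1 : D⁻¹ - D'⁻¹ = (D' - D) / (D * D') := by
      field_simp
    rw [h1, abs_div, abs_of_pos (by positivity : (0:ℝ) < D * D')]
    gcongr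
    rw [abs_le]
    constructor <;> linarith
  rw [hrw]
  calc ‖(D⁻¹ - D'⁻¹) • (x k - xb) + D'⁻¹ • ((x k - xb) - (z k - zb))‖
      ≤ |D⁻¹ - D'⁻¹| * ‖x k - xb‖ + |D'⁻¹| * ‖(x k - xb) - (z k - zb)‖ := by
        refine le_trans (norm_add_le _ _) ?_
        rw [norm_smul, norm_smul, Real.norm_eq_abs, Real.norm_eq_abs]
    _ ≤ (2 * γ / (D * D')) * D + D'⁻¹ * (2 * γ) := by
        rw [abs_of_pos (inv_pos.mpr hD'0)]
        gcongr
    _ = 4 * γ / D' := by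
        field_simp
        ring
    _ ≤ 4 * γ / (D - 2 * γ) := by
        gcongr
        · linarith
        · linarith
end

section
/- Let d, ℓ ∈ ℕ and N := binom(ℓ+d, d). Let 𝐱 = (x₁, …, x_N), 𝐳 = (z₁, …, z_N) ∈ (ℝ^d)^N and δ₀, γ, s > 0 satisfy: ‖Ψ(η_𝐱(𝐱))^{-1}‖_op ≤ s (in particular Ψ(η_𝐱(𝐱)) is invertible), δ₀ ≤ diam(𝐱), and max_{k≤N} ‖x_k − z_k‖ ≤ γ. If max(4, 16·N·ℓ·s)·γ ≤ δ₀, then Ψ(η_𝐳(𝐳)) is invertible and ‖Ψ(η_𝐳(𝐳))^{-1} − Ψ(η_𝐱(𝐱))^{-1}‖_op ≤ 16·N·ℓ·s²·γ/δ₀. -/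
/-- Index type for monomials `x^α` of total degree at most `ℓ` in `d` variables.
Its cardinality is `N = binom(ℓ+d, d)`; we use it to index both the `N` base points
of a tuple `𝐱 ∈ (ℝ^d)^N` and the rows/columns of the matrix `Ψ(𝐱)`. -/
abbrev MonIdx (d ℓ : ℕ) := {α : Fin d → Fin (ℓ + 1) // ∑ i, (α i : ℕ) ≤ ℓ}

/-- The matrix `Ψ(𝐱) ∈ ℝ^{N×N}` whose rows are the monomial vectors
`ψ(x_k) = (x_k^α)_{|α|≤ℓ}` of the points of the tuple `𝐱`. -/
noncomputable def PsiMat (d ℓ : ℕ)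
    (w : MonIdx d ℓ → EuclideanSpace ℝ (Fin d)) :
    Matrix (MonIdx d ℓ) (MonIdx d ℓ) ℝ :=
  fun r α => ∏ i, (w r) i ^ (α.1 i : ℕ)

/-- The operator norm of a square real matrix with respect to Euclidean norms. -/
noncomputable def matOpNorm {ι : Type*} [Fintype ι] [DecidableEq ι]
    (M : Matrix ι ι ℝ) : ℝ :=
  ‖LinearMap.toContinuousLinearMap (Matrix.toEuclideanLin M)‖

/-! ### Auxiliary results -/

lemma inv_perturb {R : Type*} [NormedRing R] [CompleteSpace R] [NormOneClass R]
    (a : Rˣ) (b : R) (s ε : ℝ) (hs : 0 ≤ s) (hε : 0 ≤ ε)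
    (ha : ‖((a⁻¹ : Rˣ) : R)‖ ≤ s) (hb : ‖b - (a : R)‖ ≤ ε) (hsε : s * ε ≤ 1/2) :
    IsUnit b ∧ ‖Ring.inverse b - ((a⁻¹ : Rˣ) : R)‖ ≤ 2 * s ^ 2 * ε := by
  set c : R := ((a⁻¹ : Rˣ) : R) * (b - (a : R)) with hc
  have hcn : ‖c‖ ≤ s * ε := le_trans (norm_mul_le _ _) (mul_le_mul ha hb (norm_nonneg _) hs)
  have hc1 : ‖(-c)‖ < 1 := by rw [norm_neg]; linarith
  set v : Rˣ := Units.oneSub (-c) hc1 with hv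
  have hvval : (v : R) = 1 + c := by rw [hv, Units.val_oneSub, sub_neg_eq_add]
  have hbval : b = ((a * v : Rˣ) : R) := by
    rw [Units.val_mul, hvval, mul_add, mul_one, hc, ← mul_assoc]
    simp [mul_sub]
  have hbu : IsUnit b := hbval ▸ (a * v).isUnit
  refine ⟨hbu, ?_⟩
  have hinvb : Ring.inverse b = ((v⁻¹ : Rˣ) : R) * ((a⁻¹ : Rˣ) : R) := by
    rw [hbval, Ring.inverse_unit, mul_inv_rev, Units.val_mul]
  set w : R := ((v⁻¹ : Rˣ) : R) with hw
  have hmul1 : (1 + c) * w = 1 := by rw [← hvval, hw]; exact v.mul_inv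
  have hwe : w = 1 - c * w := by
    rw [add_mul, one_mul] at hmul1
    rw [eq_sub_iff_add_eq]; exact hmul1
  have hwn : ‖w‖ ≤ 2 := by
    have h1 : ‖w‖ ≤ 1 + ‖c‖ * ‖w‖ := by
      calc ‖w‖ = ‖1 - c * w‖ := by rw [← hwe]
      _ ≤ ‖(1:R)‖ + ‖c * w‖ := norm_sub_le _ _
      _ ≤ 1 + ‖c‖ * ‖w‖ := by rw [norm_one]; exact add_le_add_right (norm_mul_le _ _) _
    nlinarith [norm_nonneg w, norm_nonneg c, hcn]
  have hdiff : Ring.inverse b - ((a⁻¹ : Rˣ) : R) = -(c * w) * ((a⁻¹ : Rˣ) : R) := by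
    rw [hinvb]
    nth_rewrite 1 [hwe]
    noncomm_ring
  rw [hdiff]
  calc ‖-(c * w) * ((a⁻¹ : Rˣ) : R)‖ ≤ ‖-(c * w)‖ * ‖((a⁻¹ : Rˣ) : R)‖ := norm_mul_le _ _
  _ ≤ ‖c‖ * ‖w‖ * s := by
      rw [norm_neg]
      exact mul_le_mul (norm_mul_le _ _) ha (norm_nonneg _) (by positivity)
  _ ≤ (s * ε) * 2 * s := by
      apply mul_le_mul _ le_rfl hs (by positivity)
      exact mul_le_mul hcn hwn (norm_nonneg _) (by positivity)
  _ = 2 * s ^ 2 * ε := by ring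

lemma monIdx_card_le (d ℓ : ℕ) :
    (Fintype.card (MonIdx d ℓ) : ℝ) ≤ ((ℓ + d).choose d : ℝ) := by
  have key : Fintype.card (MonIdx d ℓ) ≤ (ℓ + d).choose d := by
    have hcardF : Fintype.card {s : Finset (Fin (ℓ + d)) // s.card = d} = (ℓ + d).choose d := by
      rw [Fintype.card_finset_len, Fintype.card_fin]
    rw [← hcardF]
    have hSle : ∀ (α : MonIdx d ℓ) (i : Fin d), (∑ j ∈ Finset.Iic i, (α.1 j : ℕ)) ≤ ℓ := by
      intro α i
      exact le_trans (Finset.sum_le_sum_of_subset (Finset.subset_univ _)) α.2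
    set g : MonIdx d ℓ → Fin d → Fin (ℓ + d) := fun α i =>
      ⟨(i : ℕ) + ∑ j ∈ Finset.Iic i, (α.1 j : ℕ), by
        have := hSle α i
        have hi := i.2
        omega⟩ with hg
    have hmono : ∀ α, StrictMono (g α) := by
      intro α i k hik
      simp only [hg, Fin.mk_lt_mk]
      have h1 : (i : ℕ) < (k : ℕ) := hik
      have h2 : (∑ j ∈ Finset.Iic i, (α.1 j : ℕ)) ≤ ∑ j ∈ Finset.Iic k, (α.1 j : ℕ) :=
        Finset.sum_le_sum_of_subset (Finset.Iic_subset_Iic.mpr hik.le)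
      omega
    set F : MonIdx d ℓ → {s : Finset (Fin (ℓ + d)) // s.card = d} := fun α =>
      ⟨Finset.image (g α) Finset.univ, by
        rw [Finset.card_image_of_injective _ (hmono α).injective, Finset.card_univ,
          Fintype.card_fin]⟩ with hF
    apply Fintype.card_le_of_injective F
    intro α β hαβ
    have hset : Finset.image (g α) Finset.univ = Finset.image (g β) Finset.univ :=
      congrArg Subtype.val hαβ
    have hgeq : g α = g β := by
      have h1 := Finset.orderEmbOfFin_unique (f := g α) (F α).2
        (fun x => Finset.mem_image_of_mem _ (Finset.mem_univ x)) (hmono α)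
      have h2 := Finset.orderEmbOfFin_unique (s := (F α).1) (f := g β) (F α).2
        (fun x => by
          show g β x ∈ (Finset.image (g α) Finset.univ)
          rw [hset]; exact Finset.mem_image_of_mem _ (Finset.mem_univ x)) (hmono β)
      exact h1.trans h2.symm
    have hS : ∀ i : Fin d, (∑ j ∈ Finset.Iic i, (α.1 j : ℕ)) = ∑ j ∈ Finset.Iic i, (β.1 j : ℕ) := by
      intro i
      have := congrFun hgeq i
      simp only [hg, Fin.mk.injEq] at this
      omega
    have key : ∀ n : ℕ, ∀ i : Fin d, (i : ℕ) = n → (α.1 i : ℕ) = (β.1 i : ℕ) := by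
      intro n
      induction n using Nat.strong_induction_on with
      | _ n IH =>
        intro i hin
        have hi := hS i
        have hins : Finset.Iic i = insert i (Finset.Iio i) := (Finset.Iio_insert i).symm
        rw [hins, Finset.sum_insert (by simp), Finset.sum_insert (by simp)] at hi
        have hIo : (∑ j ∈ Finset.Iio i, (α.1 j : ℕ)) = ∑ j ∈ Finset.Iio i, (β.1 j : ℕ) :=
          Finset.sum_congr rfl (fun j hj => by
            have hj' : j < i := Finset.mem_Iio.mp hj
            rw [IH (j : ℕ) (by omega) j rfl])
        omega
    exact Subtype.ext (funext fun i => Fin.ext (key (i : ℕ) i rfl))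
  exact_mod_cast key

lemma matOpNorm_eq_clm {ι : Type*} [Fintype ι] [DecidableEq ι] (M : Matrix ι ι ℝ) :
    matOpNorm M = ‖Matrix.toEuclideanCLM (𝕜 := ℝ) M‖ := by
  congr 1

lemma abs_coord_le {n : Type*} [Fintype n] (w : EuclideanSpace ℝ n) (i : n) :
    |w i| ≤ ‖w‖ := by
  rw [EuclideanSpace.norm_eq, ← Real.sqrt_sq_eq_abs]
  apply Real.sqrt_le_sqrt
  calc (w i) ^ 2 = ‖w i‖ ^ 2 := by rw [Real.norm_eq_abs, sq_abs]
  _ ≤ ∑ j, ‖w j‖ ^ 2 := Finset.single_le_sum (f := fun j => ‖w j‖ ^ 2) (fun j _ => by positivity) (Finset.mem_univ i)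

lemma norm_sq_eq {n : Type*} [Fintype n] (w : EuclideanSpace ℝ n) :
    ‖w‖ ^ 2 = ∑ i, (w i) ^ 2 := by
  rw [EuclideanSpace.norm_eq, Real.sq_sqrt (by positivity)]
  simp [Real.norm_eq_abs, sq_abs]

lemma matOpNorm_le_card_mul {ι : Type*} [Fintype ι] [DecidableEq ι]
    (M : Matrix ι ι ℝ) (C : ℝ) (hC : 0 ≤ C) (h : ∀ r c, |M r c| ≤ C) :
    matOpNorm M ≤ (Fintype.card ι : ℝ) * C := by
  unfold matOpNorm
  apply ContinuousLinearMap.opNorm_le_bound _ (by positivity)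
  intro v
  rw [LinearMap.coe_toContinuousLinearMap']
  set N : ℝ := (Fintype.card ι : ℝ) with hN
  have hN0 : 0 ≤ N := by positivity
  set y := Matrix.toEuclideanLin M v with hy
  have hyr : ∀ r, y r = ∑ c, M r c * v c := by
    intro r
    rw [hy, Matrix.toEuclideanLin_apply]
    rfl
  have hsum : (∑ c, |v c|) ^ 2 ≤ N * ‖v‖ ^ 2 := by
    have := sq_sum_le_card_mul_sum_sq (s := (Finset.univ : Finset ι)) (f := fun c => |v c|)
    simp only [Finset.card_univ, sq_abs] at this
    rw [norm_sq_eq]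
    exact_mod_cast this
  have hrow : ∀ r, (y r) ^ 2 ≤ C ^ 2 * (N * ‖v‖ ^ 2) := by
    intro r
    have h1 : |y r| ≤ C * ∑ c, |v c| := by
      rw [hyr r]
      calc |∑ c, M r c * v c| ≤ ∑ c, |M r c * v c| := Finset.abs_sum_le_sum_abs _ _
      _ ≤ ∑ c, C * |v c| := Finset.sum_le_sum (fun c _ => by
          rw [abs_mul]; exact mul_le_mul_of_nonneg_right (h r c) (abs_nonneg _))
      _ = C * ∑ c, |v c| := by rw [Finset.mul_sum]
    calc (y r) ^ 2 = |y r| ^ 2 := (sq_abs _).symm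
    _ ≤ (C * ∑ c, |v c|) ^ 2 := by
        apply pow_le_pow_left₀ (abs_nonneg _) h1
    _ = C ^ 2 * (∑ c, |v c|) ^ 2 := by ring
    _ ≤ C ^ 2 * (N * ‖v‖ ^ 2) := by
        apply mul_le_mul_of_nonneg_left hsum (by positivity)
  have hnorm2 : ‖y‖ ^ 2 ≤ (N * C * ‖v‖) ^ 2 := by
    rw [norm_sq_eq]
    calc ∑ r, (y r) ^ 2 ≤ ∑ _r : ι, C ^ 2 * (N * ‖v‖ ^ 2) :=
      Finset.sum_le_sum (fun r _ => hrow r)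
    _ = N * (C ^ 2 * (N * ‖v‖ ^ 2)) := by rw [Finset.sum_const, Finset.card_univ, nsmul_eq_mul]
    _ = (N * C * ‖v‖) ^ 2 := by ring
  have hfin := Real.sqrt_le_sqrt hnorm2
  rwa [Real.sqrt_sq (norm_nonneg _), Real.sqrt_sq (by positivity)] at hfin

section tup
variable {ι : Type*} [Fintype ι] [Nonempty ι] {d : ℕ} (w v : ι → EuclideanSpace ℝ (Fin d))

lemma tupDiam_pair_le (i j : ι) : ‖w i - w j‖ ≤ tupDiam w :=
  le_ciSup (f := fun p : ι × ι => ‖w p.1 - w p.2‖) (Set.Finite.bddAbove (Set.finite_range _)) (⟨i, j⟩ : ι × ι)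

lemma tupDiam_nonneg : 0 ≤ tupDiam w :=
  le_trans (norm_nonneg _) (tupDiam_pair_le w (Classical.arbitrary ι) (Classical.arbitrary ι))

lemma tupDiam_le {C : ℝ} (h : ∀ i j, ‖w i - w j‖ ≤ C) : tupDiam w ≤ C :=
  ciSup_le (fun p => h p.1 p.2)

lemma tupDiam_diff_le {γ : ℝ} (h : ∀ k, ‖w k - v k‖ ≤ γ) :
    tupDiam v ≤ tupDiam w + 2 * γ := by
  apply tupDiam_le
  intro i j
  calc ‖v i - v j‖ = ‖(w i - w j) - (w i - v i) + (w j - v j)‖ := by congr 1; abel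
  _ ≤ ‖(w i - w j) - (w i - v i)‖ + ‖w j - v j‖ := norm_add_le _ _
  _ ≤ ‖w i - w j‖ + ‖w i - v i‖ + ‖w j - v j‖ := by
      exact add_le_add_left (norm_sub_le _ _) _
  _ ≤ tupDiam w + γ + γ := add_le_add (add_le_add (tupDiam_pair_le w i j) (h i)) (h j)
  _ = tupDiam w + 2 * γ := by ring

lemma centered_norm_le (k : ι) :
    ‖w k - (Fintype.card ι : ℝ)⁻¹ • ∑ i, w i‖ ≤ tupDiam w := by
  have hN : (0:ℝ) < (Fintype.card ι : ℝ) := by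
    exact_mod_cast Fintype.card_pos
  have key : w k - (Fintype.card ι : ℝ)⁻¹ • ∑ i, w i
      = (Fintype.card ι : ℝ)⁻¹ • ∑ i, (w k - w i) := by
    rw [Finset.sum_sub_distrib, smul_sub, Finset.sum_const, Finset.card_univ]
    rw [← Nat.cast_smul_eq_nsmul ℝ, smul_smul, inv_mul_cancel₀ hN.ne', one_smul]
  rw [key, norm_smul]
  calc ‖(Fintype.card ι : ℝ)⁻¹‖ * ‖∑ i, (w k - w i)‖
      ≤ (Fintype.card ι : ℝ)⁻¹ * ∑ i, ‖w k - w i‖ := by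
        rw [Real.norm_eq_abs, abs_of_pos (by positivity)]
        exact mul_le_mul_of_nonneg_left (norm_sum_le _ _) (by positivity)
  _ ≤ (Fintype.card ι : ℝ)⁻¹ * ∑ _i : ι, tupDiam w := by
        apply mul_le_mul_of_nonneg_left (Finset.sum_le_sum fun i _ => tupDiam_pair_le w k i) (by positivity)
  _ = tupDiam w := by
        rw [Finset.sum_const, Finset.card_univ, nsmul_eq_mul, ← mul_assoc,
          inv_mul_cancel₀ hN.ne', one_mul]

end tup

lemma abs_pow_sub_pow_le' (p q : ℝ) (hp : |p| ≤ 1) (hq : |q| ≤ 1) (n : ℕ) :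
    |p ^ n - q ^ n| ≤ n * |p - q| := by
  induction n with
  | zero => simp
  | succ n IH =>
    have key : p ^ (n+1) - q ^ (n+1) = p ^ n * (p - q) + (p ^ n - q ^ n) * q := by ring
    calc |p ^ (n+1) - q ^ (n+1)| ≤ |p ^ n * (p - q)| + |(p ^ n - q ^ n) * q| := by
          rw [key]; exact abs_add_le _ _
    _ ≤ |p - q| + n * |p - q| := by
        apply add_le_add
        · rw [abs_mul, abs_pow]
          exact mul_le_of_le_one_left (abs_nonneg _) (pow_le_one₀ (abs_nonneg _) hp)
        · rw [abs_mul]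
          exact le_trans (mul_le_of_le_one_right (abs_nonneg _) hq) IH
    _ = (n + 1 : ℕ) * |p - q| := by push_cast; ring

lemma abs_prod_sub_prod_le {ι : Type*} (s : Finset ι) (p q : ι → ℝ)
    (hp : ∀ i ∈ s, |p i| ≤ 1) (hq : ∀ i ∈ s, |q i| ≤ 1) :
    |(∏ i ∈ s, p i) - ∏ i ∈ s, q i| ≤ ∑ i ∈ s, |p i - q i| := by
  induction s using Finset.cons_induction with
  | empty => simp
  | cons a s ha IH =>
    rw [Finset.prod_cons, Finset.prod_cons, Finset.sum_cons]
    have hp' : ∀ i ∈ s, |p i| ≤ 1 := fun i hi => hp i (Finset.mem_cons_of_mem hi)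
    have hq' : ∀ i ∈ s, |q i| ≤ 1 := fun i hi => hq i (Finset.mem_cons_of_mem hi)
    have hpa : |p a| ≤ 1 := hp a (Finset.mem_cons_self a s)
    have hqprod : |∏ i ∈ s, q i| ≤ 1 := by
      rw [Finset.abs_prod]
      exact Finset.prod_le_one (fun i _ => abs_nonneg _) hq'
    have key : p a * ∏ i ∈ s, p i - q a * ∏ i ∈ s, q i
        = p a * ((∏ i ∈ s, p i) - ∏ i ∈ s, q i) + (p a - q a) * ∏ i ∈ s, q i := by ring
    calc |p a * ∏ i ∈ s, p i - q a * ∏ i ∈ s, q i|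
        ≤ |p a * ((∏ i ∈ s, p i) - ∏ i ∈ s, q i)| + |(p a - q a) * ∏ i ∈ s, q i| := by
          rw [key]; exact abs_add_le _ _
    _ ≤ |(∏ i ∈ s, p i) - ∏ i ∈ s, q i| + |p a - q a| := by
          apply add_le_add
          · rw [abs_mul]
            exact mul_le_of_le_one_left (abs_nonneg _) hpa
          · rw [abs_mul]
            exact mul_le_of_le_one_right (abs_nonneg _) hqprod
    _ ≤ |p a - q a| + ∑ i ∈ s, |p i - q i| := by
          rw [add_comm]
          exact add_le_add_right (IH hp' hq') _

noncomputable def clmUnit {ι : Type*} [Fintype ι] [DecidableEq ι]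
    (M : Matrix ι ι ℝ) (h : IsUnit M.det) :
    (EuclideanSpace ℝ ι →L[ℝ] EuclideanSpace ℝ ι)ˣ where
  val := Matrix.toEuclideanCLM (𝕜 := ℝ) M
  inv := Matrix.toEuclideanCLM (𝕜 := ℝ) M⁻¹
  val_inv := by rw [← map_mul, Matrix.mul_nonsing_inv _ h, map_one]
  inv_val := by rw [← map_mul, Matrix.nonsing_inv_mul _ h, map_one]

lemma clmUnit_val {ι : Type*} [Fintype ι] [DecidableEq ι]
    (M : Matrix ι ι ℝ) (h : IsUnit M.det) :
    (clmUnit M h : (EuclideanSpace ℝ ι →L[ℝ] EuclideanSpace ℝ ι)ˣ).val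
      = Matrix.toEuclideanCLM (𝕜 := ℝ) M := rfl

lemma clmUnit_inv {ι : Type*} [Fintype ι] [DecidableEq ι]
    (M : Matrix ι ι ℝ) (h : IsUnit M.det) :
    ((clmUnit M h)⁻¹ : (EuclideanSpace ℝ ι →L[ℝ] EuclideanSpace ℝ ι)ˣ).val
      = Matrix.toEuclideanCLM (𝕜 := ℝ) M⁻¹ := rfl

lemma ringInverse_clm {ι : Type*} [Fintype ι] [DecidableEq ι]
    (M : Matrix ι ι ℝ) (h : IsUnit M.det) :
    Ring.inverse (Matrix.toEuclideanCLM (𝕜 := ℝ) M)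
      = Matrix.toEuclideanCLM (𝕜 := ℝ) M⁻¹ := by
  rw [show Matrix.toEuclideanCLM (𝕜 := ℝ) M = (clmUnit M h).val from rfl,
    Ring.inverse_unit]
  rfl

lemma isUnit_of_isUnit_clm {ι : Type*} [Fintype ι] [DecidableEq ι]
    (M : Matrix ι ι ℝ) (h : IsUnit (Matrix.toEuclideanCLM (𝕜 := ℝ) M)) :
    IsUnit M := by
  have h2 := IsUnit.map (Matrix.toEuclideanCLM (𝕜 := ℝ) (n := ι)).symm h
  simpa using h2


set_option maxHeartbeats 2000000 in
/-- Lemma `lmm:perturb`.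
Let `𝐱, 𝐳 ∈ (ℝ^d)^N`, `N = binom(ℓ+d,d)`, and `δ₀, γ, s > 0` with
`Ψ(η_𝐱(𝐱))` invertible, `‖Ψ(η_𝐱(𝐱))⁻¹‖_op ≤ s`, `δ₀ ≤ diam(𝐱)` and
`max_k ‖x_k − z_k‖ ≤ γ`.  If `max(4, 16·N·ℓ·s)·γ ≤ δ₀`, then `Ψ(η_𝐳(𝐳))` is
invertible and `‖Ψ(η_𝐳(𝐳))⁻¹ − Ψ(η_𝐱(𝐱))⁻¹‖_op ≤ 16·N·ℓ·s²·γ/δ₀`. -/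
theorem stmt13 (d ℓ : ℕ) (hd : 1 ≤ d) (hℓ : 1 ≤ ℓ)
    (x z : MonIdx d ℓ → EuclideanSpace ℝ (Fin d))
    (δ₀ γ s : ℝ) (hδ₀ : 0 < δ₀) (hγpos : 0 < γ) (hs : 0 < s)
    (hinv : IsUnit (PsiMat d ℓ (fun k => normMap x (x k))))
    (hops : matOpNorm (PsiMat d ℓ (fun k => normMap x (x k)))⁻¹ ≤ s)
    (hdiam : δ₀ ≤ tupDiam x)
    (hγ : ∀ k, ‖x k - z k‖ ≤ γ)
    (hcond : max 4 (16 * ((ℓ + d).choose d : ℝ) * ℓ * s) * γ ≤ δ₀) :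
    IsUnit (PsiMat d ℓ (fun k => normMap z (z k))) ∧
    matOpNorm ((PsiMat d ℓ (fun k => normMap z (z k)))⁻¹ -
        (PsiMat d ℓ (fun k => normMap x (x k)))⁻¹) ≤
      16 * ((ℓ + d).choose d : ℝ) * ℓ * s ^ 2 * γ / δ₀ := by
  classical
  haveI hne : Nonempty (MonIdx d ℓ) := ⟨⟨fun _ => 0, by simp⟩⟩
  set Ψx := PsiMat d ℓ (fun k => normMap x (x k)) with hΨx
  set Ψz := PsiMat d ℓ (fun k => normMap z (z k)) with hΨz
  set N : ℝ := (Fintype.card (MonIdx d ℓ) : ℝ) with hNdef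
  have hN1 : (1:ℝ) ≤ N := by
    rw [hNdef]; exact_mod_cast Fintype.card_pos
  have hNle : N ≤ ((ℓ + d).choose d : ℝ) := monIdx_card_le d ℓ
  have hℓ1 : (1:ℝ) ≤ (ℓ:ℝ) := by exact_mod_cast hℓ
  have hγ0 : (0:ℝ) ≤ γ := hγpos.le
  have h4γ : 4 * γ ≤ δ₀ :=
    le_trans (mul_le_mul_of_nonneg_right (le_max_left _ _) hγ0) hcond
  have h16 : 16 * N * ℓ * s * γ ≤ δ₀ := by
    refine le_trans ?_ (le_trans (mul_le_mul_of_nonneg_right (le_max_right _ _) hγ0) hcond)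
    have h1 : 16 * N * ℓ * s ≤ 16 * ((ℓ + d).choose d : ℝ) * ℓ * s := by
      gcongr
    exact mul_le_mul_of_nonneg_right h1 hγ0
  -- diameters
  have hDx : 0 < tupDiam x := lt_of_lt_of_le hδ₀ hdiam
  have hγ' : ∀ k, ‖z k - x k‖ ≤ γ := fun k => by rw [norm_sub_rev]; exact hγ k
  have hDzup : tupDiam z ≤ tupDiam x + 2 * γ := tupDiam_diff_le x z hγ
  have hDxup : tupDiam x ≤ tupDiam z + 2 * γ := tupDiam_diff_le z x hγ'
  have hDzlow : δ₀ / 2 ≤ tupDiam z := by linarith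
  have hDz : 0 < tupDiam z := by linarith
  -- unit-ball bounds for normalized points
  have hbound1 : ∀ (w : MonIdx d ℓ → EuclideanSpace ℝ (Fin d)),
      0 < tupDiam w → ∀ k, ‖normMap w (w k)‖ ≤ 1 := by
    intro w hw k
    rw [normMap, norm_smul, Real.norm_eq_abs, abs_of_pos (inv_pos.mpr hw)]
    calc (tupDiam w)⁻¹ * ‖w k - (Fintype.card (MonIdx d ℓ) : ℝ)⁻¹ • ∑ i, w i‖
        ≤ (tupDiam w)⁻¹ * tupDiam w :=
          mul_le_mul_of_nonneg_left (centered_norm_le w k) (by positivity)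
    _ = 1 := inv_mul_cancel₀ hw.ne'
  have hux : ∀ k, ‖normMap x (x k)‖ ≤ 1 := hbound1 x hDx
  have hvz : ∀ k, ‖normMap z (z k)‖ ≤ 1 := hbound1 z hDz
  -- mean difference
  have hm : ‖(Fintype.card (MonIdx d ℓ) : ℝ)⁻¹ • ∑ i, z i -
      (Fintype.card (MonIdx d ℓ) : ℝ)⁻¹ • ∑ i, x i‖ ≤ γ := by
    have hNpos : (0:ℝ) < (Fintype.card (MonIdx d ℓ) : ℝ) := by exact_mod_cast Fintype.card_pos
    rw [← smul_sub, ← Finset.sum_sub_distrib, norm_smul, Real.norm_eq_abs,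
      abs_of_pos (by positivity)]
    calc (Fintype.card (MonIdx d ℓ) : ℝ)⁻¹ * ‖∑ i, (z i - x i)‖
        ≤ (Fintype.card (MonIdx d ℓ) : ℝ)⁻¹ * ∑ i, ‖z i - x i‖ :=
          mul_le_mul_of_nonneg_left (norm_sum_le _ _) (by positivity)
    _ ≤ (Fintype.card (MonIdx d ℓ) : ℝ)⁻¹ * ∑ _i : MonIdx d ℓ, γ :=
          mul_le_mul_of_nonneg_left (Finset.sum_le_sum fun i _ => hγ' i) (by positivity)
    _ = γ := by
          rw [Finset.sum_const, Finset.card_univ, nsmul_eq_mul, ← mul_assoc,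
            inv_mul_cancel₀ hNpos.ne', one_mul]
  -- pointwise perturbation of normalized points
  have hpt : ∀ k, ‖normMap z (z k) - normMap x (x k)‖ ≤ 8 * γ / δ₀ := by
    intro k
    set mx := (Fintype.card (MonIdx d ℓ) : ℝ)⁻¹ • ∑ i, x i with hmx
    set mz := (Fintype.card (MonIdx d ℓ) : ℝ)⁻¹ • ∑ i, z i with hmz
    have hsplit : normMap z (z k) - normMap x (x k)
        = (tupDiam z)⁻¹ • ((z k - mz) - (x k - mx))
          + ((tupDiam z)⁻¹ - (tupDiam x)⁻¹) • (x k - mx) := by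
      rw [normMap, normMap, ← hmx, ← hmz]
      module
    have t1 : ‖(tupDiam z)⁻¹ • ((z k - mz) - (x k - mx))‖ ≤ (tupDiam z)⁻¹ * (2 * γ) := by
      rw [norm_smul, Real.norm_eq_abs, abs_of_pos (inv_pos.mpr hDz)]
      apply mul_le_mul_of_nonneg_left _ (by positivity)
      calc ‖(z k - mz) - (x k - mx)‖ = ‖(z k - x k) - (mz - mx)‖ := by congr 1; abel
      _ ≤ ‖z k - x k‖ + ‖mz - mx‖ := norm_sub_le _ _
      _ ≤ γ + γ := add_le_add (hγ' k) hm
      _ = 2 * γ := by ring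
    have t2 : ‖((tupDiam z)⁻¹ - (tupDiam x)⁻¹) • (x k - mx)‖ ≤ 2 * γ / tupDiam z := by
      rw [norm_smul, Real.norm_eq_abs]
      have habs : |(tupDiam z)⁻¹ - (tupDiam x)⁻¹| ≤ 2 * γ / (tupDiam z * tupDiam x) := by
        have he : (tupDiam z)⁻¹ - (tupDiam x)⁻¹ = (tupDiam x - tupDiam z) / (tupDiam z * tupDiam x) := by
          field_simp
        rw [he, abs_div, abs_of_pos (mul_pos hDz hDx)]
        gcongr
        rw [abs_sub_le_iff]
        exact ⟨by linarith, by linarith⟩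
      calc |(tupDiam z)⁻¹ - (tupDiam x)⁻¹| * ‖x k - mx‖
          ≤ (2 * γ / (tupDiam z * tupDiam x)) * tupDiam x :=
            mul_le_mul habs (centered_norm_le x k) (norm_nonneg _) (by positivity)
      _ = 2 * γ / tupDiam z := by field_simp [hDz.ne', hDx.ne']
    calc ‖normMap z (z k) - normMap x (x k)‖
        ≤ (tupDiam z)⁻¹ * (2 * γ) + 2 * γ / tupDiam z := by
          rw [hsplit]; exact le_trans (norm_add_le _ _) (add_le_add t1 t2)
    _ = 4 * γ / tupDiam z := by field_simp [hDz.ne']; ring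
    _ ≤ 8 * γ / δ₀ := by
        rw [div_le_div_iff₀ hDz hδ₀]
        nlinarith
  -- entrywise bound on the matrix difference
  have hentry : ∀ r c, |(Ψz - Ψx) r c| ≤ (ℓ:ℝ) * (8 * γ / δ₀) := by
    intro r c
    rw [Matrix.sub_apply]
    set u := normMap x (x r) with hu
    set v := normMap z (z r) with hv
    have hun : ‖u‖ ≤ 1 := hux r
    have hvn : ‖v‖ ≤ 1 := hvz r
    have hΨze : Ψz r c = ∏ i, v i ^ (c.1 i : ℕ) := rfl
    have hΨxe : Ψx r c = ∏ i, u i ^ (c.1 i : ℕ) := rfl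
    rw [hΨze, hΨxe]
    have step1 : |(∏ i, v i ^ (c.1 i : ℕ)) - ∏ i, u i ^ (c.1 i : ℕ)|
        ≤ ∑ i, |v i ^ (c.1 i : ℕ) - u i ^ (c.1 i : ℕ)| := by
      apply abs_prod_sub_prod_le
      · intro i _
        rw [abs_pow]
        exact pow_le_one₀ (abs_nonneg _) (le_trans (abs_coord_le v i) hvn)
      · intro i _
        rw [abs_pow]
        exact pow_le_one₀ (abs_nonneg _) (le_trans (abs_coord_le u i) hun)
    have step2 : ∀ i : Fin d, |v i ^ (c.1 i : ℕ) - u i ^ (c.1 i : ℕ)|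
        ≤ ((c.1 i : ℕ) : ℝ) * ‖v - u‖ := by
      intro i
      have h1 := abs_pow_sub_pow_le' (v i) (u i) (le_trans (abs_coord_le v i) hvn)
        (le_trans (abs_coord_le u i) hun) (c.1 i : ℕ)
      refine le_trans h1 ?_
      apply mul_le_mul_of_nonneg_left _ (by positivity)
      have : v i - u i = (v - u) i := rfl
      rw [this]
      exact abs_coord_le (v - u) i
    calc |(∏ i, v i ^ (c.1 i : ℕ)) - ∏ i, u i ^ (c.1 i : ℕ)|
        ≤ ∑ i, |v i ^ (c.1 i : ℕ) - u i ^ (c.1 i : ℕ)| := step1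
    _ ≤ ∑ i, ((c.1 i : ℕ) : ℝ) * ‖v - u‖ := Finset.sum_le_sum (fun i _ => step2 i)
    _ = (((∑ i, (c.1 i : ℕ)) : ℕ) : ℝ) * ‖v - u‖ := by
        rw [← Finset.sum_mul]; push_cast; ring
    _ ≤ (ℓ:ℝ) * (8 * γ / δ₀) := by
        apply mul_le_mul _ (hpt r) (norm_nonneg _) (by positivity)
        exact_mod_cast c.2
  have hEop : matOpNorm (Ψz - Ψx) ≤ N * ((ℓ:ℝ) * (8 * γ / δ₀)) :=
    matOpNorm_le_card_mul _ _ (by positivity) hentry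
  -- move to continuous linear maps
  have hdetx : IsUnit (Matrix.det Ψx) := (Matrix.isUnit_iff_isUnit_det Ψx).mp hinv
  have hanorm : ‖((clmUnit Ψx hdetx)⁻¹ :
      (EuclideanSpace ℝ (MonIdx d ℓ) →L[ℝ] EuclideanSpace ℝ (MonIdx d ℓ))ˣ).val‖ ≤ s := by
    rw [clmUnit_inv, ← matOpNorm_eq_clm]; exact hops
  have hbnorm : ‖Matrix.toEuclideanCLM (𝕜 := ℝ) Ψz - (clmUnit Ψx hdetx :
      (EuclideanSpace ℝ (MonIdx d ℓ) →L[ℝ] EuclideanSpace ℝ (MonIdx d ℓ))ˣ).val‖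
      ≤ N * ((ℓ:ℝ) * (8 * γ / δ₀)) := by
    rw [clmUnit_val, ← map_sub, ← matOpNorm_eq_clm]
    exact hEop
  have hsε : s * (N * ((ℓ:ℝ) * (8 * γ / δ₀))) ≤ 1 / 2 := by
    have he : s * (N * ((ℓ:ℝ) * (8 * γ / δ₀))) = 8 * N * ℓ * s * γ / δ₀ := by ring
    rw [he, div_le_iff₀ hδ₀]
    linarith
  obtain ⟨hbu, hbound⟩ := inv_perturb (clmUnit Ψx hdetx) (Matrix.toEuclideanCLM (𝕜 := ℝ) Ψz)
    s (N * ((ℓ:ℝ) * (8 * γ / δ₀))) hs.le (by positivity) hanorm hbnorm hsε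
  -- invertibility of Ψz
  have hzunit : IsUnit Ψz := isUnit_of_isUnit_clm Ψz hbu
  refine ⟨hzunit, ?_⟩
  have hdetz : IsUnit (Matrix.det Ψz) := (Matrix.isUnit_iff_isUnit_det Ψz).mp hzunit
  have heq : matOpNorm (Ψz⁻¹ - Ψx⁻¹)
      = ‖Ring.inverse (Matrix.toEuclideanCLM (𝕜 := ℝ) Ψz) - ((clmUnit Ψx hdetx)⁻¹ :
          (EuclideanSpace ℝ (MonIdx d ℓ) →L[ℝ] EuclideanSpace ℝ (MonIdx d ℓ))ˣ).val‖ := by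
    have hms : Matrix.toEuclideanCLM (𝕜 := ℝ) (Ψz⁻¹ - Ψx⁻¹)
        = Matrix.toEuclideanCLM (𝕜 := ℝ) Ψz⁻¹ - Matrix.toEuclideanCLM (𝕜 := ℝ) Ψx⁻¹ :=
      map_sub (Matrix.toEuclideanCLM (𝕜 := ℝ) (n := MonIdx d ℓ)) _ _
    rw [matOpNorm_eq_clm, hms, ringInverse_clm Ψz hdetz, clmUnit_inv]
  rw [heq]
  refine le_trans hbound ?_
  have he2 : 2 * s ^ 2 * (N * ((ℓ:ℝ) * (8 * γ / δ₀))) = 16 * N * ℓ * s ^ 2 * γ / δ₀ := by ring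
  rw [he2]
  gcongr
end

section
/- Let d, ℓ, n ∈ ℕ, T, h > 0, s ∈ {0, …, ℓ}, and let 𝐯 be s unit directions in ℝ^d. Let x₁, …, x_n ∈ [0,T]^d, let K : [0,∞) → ℝ be a kernel, and set ψ(z) := ((α!)^{-1} z^α)_{|α|≤ℓ} ∈ ℝ^N with N = binom(ℓ+d,d). For x ∈ ℝ^d define B(x) := (T^d/(n h^d)) Σ_{i=1}^n ψ((x_i−x)/h) ψ((x_i−x)/h)ᵀ K(‖x_i−x‖/h) and the weights w_i(x) := (T^d/(n h^{d+s})) D_𝐯ψ(0)ᵀ B(x)^{-1} ψ((x_i−x)/h) K(‖x_i−x‖/h). If the smallest eigenvalue of B(x) is positive, then for every polynomial q : ℝ^d → ℝ of degree at most ℓ: Σ_{i=1}^n w_i(x) q(x_i) = D_𝐯 q(x), the s-th directional derivative of q at x in directions 𝐯. -/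
/-- The vector `ψ(z) = ((α!)⁻¹ z^α)_{|α|≤ℓ} ∈ ℝ^N`. -/
noncomputable def psiVec (d ℓ : ℕ) (z : EuclideanSpace ℝ (Fin d)) :
    MonIdx d ℓ → ℝ :=
  fun α => ((∏ i, Nat.factorial (α.1 i) : ℕ) : ℝ)⁻¹ * ∏ i, z i ^ (α.1 i : ℕ)

/-- The local polynomial design matrix
`B(x) = (T^d/(n h^d)) Σᵢ ψ((xᵢ−x)/h) ψ((xᵢ−x)/h)ᵀ K(‖xᵢ−x‖/h)`. -/
noncomputable def Bmat (d ℓ n : ℕ) (T h : ℝ) (K : ℝ → ℝ)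
    (X : Fin n → EuclideanSpace ℝ (Fin d)) (x : EuclideanSpace ℝ (Fin d)) :
    Matrix (MonIdx d ℓ) (MonIdx d ℓ) ℝ :=
  (T ^ d / (n * h ^ d)) •
    ∑ i, K (‖X i - x‖ / h) •
      Matrix.vecMulVec (psiVec d ℓ (h⁻¹ • (X i - x))) (psiVec d ℓ (h⁻¹ • (X i - x)))

/-- The vector `D_𝐯 ψ(0)`: the `s`-th iterated directional derivative of `ψ` at `0`
in the directions `𝐯`, taken entrywise. -/
noncomputable def DpsiVec (d ℓ s : ℕ) (v : Fin s → EuclideanSpace ℝ (Fin d)) :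
    MonIdx d ℓ → ℝ :=
  fun α => iteratedFDeriv ℝ s (fun z => psiVec d ℓ z α) 0 v

/-- The local polynomial weights
`wᵢ(x) = (T^d/(n h^{d+s})) D_𝐯ψ(0)ᵀ B(x)⁻¹ ψ((xᵢ−x)/h) K(‖xᵢ−x‖/h)`. -/
noncomputable def lpWeight (d ℓ n s : ℕ) (T h : ℝ) (K : ℝ → ℝ)
    (v : Fin s → EuclideanSpace ℝ (Fin d))
    (X : Fin n → EuclideanSpace ℝ (Fin d)) (x : EuclideanSpace ℝ (Fin d))
    (i : Fin n) : ℝ :=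
  (T ^ d / (n * h ^ (d + s))) *
    dotProduct (DpsiVec d ℓ s v)
      ((Bmat d ℓ n T h K X x)⁻¹.mulVec (psiVec d ℓ (h⁻¹ • (X i - x)))) *
    K (‖X i - x‖ / h)


section

open MvPolynomial

noncomputable section Stmt14Aux

variable {d : ℕ}

/-- Evaluation of a multivariate polynomial as a function on Euclidean space. -/
def evalFun (p : MvPolynomial (Fin d) ℝ) : EuclideanSpace ℝ (Fin d) → ℝ :=
  fun y => MvPolynomial.eval (fun j => y j) p

/-- Directional-derivative operator on polynomials. -/
def Dop (w : EuclideanSpace ℝ (Fin d)) :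
    MvPolynomial (Fin d) ℝ →ₗ[ℝ] MvPolynomial (Fin d) ℝ :=
  ∑ j, w j • (pderiv j : Derivation ℝ (MvPolynomial (Fin d) ℝ) _).toLinearMap

lemma Dop_apply (w : EuclideanSpace ℝ (Fin d)) (p : MvPolynomial (Fin d) ℝ) :
    Dop w p = ∑ j, w j • pderiv j p := by
  simp [Dop]

/-- The derivative (as a continuous linear map) of `evalFun p` at `y`. -/
def Dlin (p : MvPolynomial (Fin d) ℝ) (y : EuclideanSpace ℝ (Fin d)) :
    EuclideanSpace ℝ (Fin d) →L[ℝ] ℝ :=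
  ∑ j, evalFun (pderiv j p) y • (EuclideanSpace.proj j : EuclideanSpace ℝ (Fin d) →L[ℝ] ℝ)

lemma Dlin_apply (p : MvPolynomial (Fin d) ℝ) (y w : EuclideanSpace ℝ (Fin d)) :
    Dlin p y w = evalFun (Dop w p) y := by
  simp only [Dlin, Dop_apply, evalFun, ContinuousLinearMap.sum_apply,
    ContinuousLinearMap.smul_apply, PiLp.proj_apply, map_sum, smul_eq_C_mul,
    map_mul, eval_C, smul_eq_mul]
  exact Finset.sum_congr rfl fun j _ => mul_comm _ _

lemma hasFDerivAt_evalFun (p : MvPolynomial (Fin d) ℝ) (y : EuclideanSpace ℝ (Fin d)) :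
    HasFDerivAt (evalFun p) (Dlin p y) y := by
  induction p using MvPolynomial.induction_on with
  | C a =>
    have h1 : evalFun (C a : MvPolynomial (Fin d) ℝ) = fun _ => a := by
      funext z; simp [evalFun]
    have h2 : Dlin (C a : MvPolynomial (Fin d) ℝ) y = 0 := by
      simp [Dlin, pderiv_C, evalFun]
    rw [h1, h2]
    exact hasFDerivAt_const a y
  | add p q hp hq =>
    have h1 : evalFun (p + q) = fun z => evalFun p z + evalFun q z := by
      funext z; simp [evalFun]
    have h2 : Dlin (p + q) y = Dlin p y + Dlin q y := by
      simp [Dlin, evalFun, add_smul, Finset.sum_add_distrib]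
    rw [h1, h2]
    exact hp.add hq
  | mul_X p i hp =>
    have h1 : evalFun (p * X i) = fun z => evalFun p z * z i := by
      funext z; simp [evalFun]
    have hproj : HasFDerivAt (fun z : EuclideanSpace ℝ (Fin d) => z i)
        (EuclideanSpace.proj i : EuclideanSpace ℝ (Fin d) →L[ℝ] ℝ) y :=
      (EuclideanSpace.proj i : EuclideanSpace ℝ (Fin d) →L[ℝ] ℝ).hasFDerivAt
    have h2 : Dlin (p * X i) y
        = evalFun p y • (EuclideanSpace.proj i : EuclideanSpace ℝ (Fin d) →L[ℝ] ℝ)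
          + y i • Dlin p y := by
      ext w
      classical
      simp only [Dlin, ContinuousLinearMap.add_apply, ContinuousLinearMap.sum_apply,
        ContinuousLinearMap.smul_apply, PiLp.proj_apply, smul_eq_mul, evalFun,
        pderiv_mul, map_add, map_mul, eval_X, add_mul, Finset.mul_sum]
      rw [Finset.sum_add_distrib, add_comm]
      congr 1
      · rw [Finset.sum_eq_single i]
        · simp
        · intro j _ hj
          simp [pderiv_X_of_ne (Ne.symm hj)]
        · simp
      · exact Finset.sum_congr rfl fun j _ => by ring
    rw [h1, h2]
    exact hp.mul hproj

lemma fderiv_evalFun (p : MvPolynomial (Fin d) ℝ) (y : EuclideanSpace ℝ (Fin d)) :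
    fderiv ℝ (evalFun p) y = Dlin p y :=
  (hasFDerivAt_evalFun p y).fderiv

lemma contDiff_evalFun (p : MvPolynomial (Fin d) ℝ) : ContDiff ℝ ⊤ (evalFun p) := by
  induction p using MvPolynomial.induction_on with
  | C a =>
    have h1 : evalFun (C a : MvPolynomial (Fin d) ℝ) = fun _ => a := by
      funext z; simp [evalFun]
    rw [h1]; exact contDiff_const
  | add p q hp hq =>
    have h1 : evalFun (p + q) = fun z => evalFun p z + evalFun q z := by
      funext z; simp [evalFun]
    rw [h1]; exact hp.add hq
  | mul_X p i hp =>
    have h1 : evalFun (p * X i) = fun z => evalFun p z * z i := by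
      funext z; simp [evalFun]
    rw [h1]
    exact hp.mul (EuclideanSpace.proj i : EuclideanSpace ℝ (Fin d) →L[ℝ] ℝ).contDiff

lemma iteratedFDeriv_apply_right (f : EuclideanSpace ℝ (Fin d) → ℝ) (hf : ContDiff ℝ ⊤ f)
    (s : ℕ) (v : Fin (s + 1) → EuclideanSpace ℝ (Fin d)) (y : EuclideanSpace ℝ (Fin d)) :
    iteratedFDeriv ℝ (s + 1) f y v
      = iteratedFDeriv ℝ s (fun z => fderiv ℝ f z (v (Fin.last s))) y (Fin.init v) := by
  rw [iteratedFDeriv_succ_apply_right]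
  have hcomp := (ContinuousLinearMap.apply ℝ ℝ (v (Fin.last s))).iteratedFDeriv_comp_left
    ((hf.fderiv_right le_top).contDiffAt (x := y)) (i := s) le_top
  have h2 : (fun z => fderiv ℝ f z (v (Fin.last s)))
      = (ContinuousLinearMap.apply ℝ ℝ (v (Fin.last s))) ∘ (fderiv ℝ f) := by
    funext z; simp
  rw [h2, hcomp]
  simp

lemma evalFun_smul' (c : ℝ) (p : MvPolynomial (Fin d) ℝ) (y : EuclideanSpace ℝ (Fin d)) :
    evalFun (c • p) y = c * evalFun p y := by
  simp [evalFun, smul_eq_C_mul]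

/-- Iterated directional-derivative operator on polynomials. -/
noncomputable def DopIter : (s : ℕ) → (Fin s → EuclideanSpace ℝ (Fin d)) →
    (MvPolynomial (Fin d) ℝ →ₗ[ℝ] MvPolynomial (Fin d) ℝ)
  | 0, _ => LinearMap.id
  | s + 1, v => (DopIter s (Fin.init v)).comp (Dop (v (Fin.last s)))

lemma iteratedFDeriv_evalFun (s : ℕ) (v : Fin s → EuclideanSpace ℝ (Fin d))
    (p : MvPolynomial (Fin d) ℝ) (y : EuclideanSpace ℝ (Fin d)) :
    iteratedFDeriv ℝ s (evalFun p) y v = evalFun (DopIter s v p) y := by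
  induction s generalizing p with
  | zero => rw [iteratedFDeriv_zero_apply]; rfl
  | succ s ih =>
    rw [iteratedFDeriv_apply_right (evalFun p) (contDiff_evalFun p) s v y]
    have h1 : (fun z => fderiv ℝ (evalFun p) z (v (Fin.last s)))
        = evalFun (Dop (v (Fin.last s)) p) := by
      funext z; rw [fderiv_evalFun, Dlin_apply]
    rw [h1, ih]
    rfl

lemma iteratedFDeriv_evalFun_affine (x : EuclideanSpace ℝ (Fin d)) (h : ℝ)
    (s : ℕ) (v : Fin s → EuclideanSpace ℝ (Fin d))
    (p : MvPolynomial (Fin d) ℝ) (z0 : EuclideanSpace ℝ (Fin d)) :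
    iteratedFDeriv ℝ s (fun z => evalFun p (x + h • z)) z0 v
      = h ^ s * iteratedFDeriv ℝ s (evalFun p) (x + h • z0) v := by
  induction s generalizing p with
  | zero => simp
  | succ s ih =>
    have hcd : ContDiff ℝ ⊤ (fun z : EuclideanSpace ℝ (Fin d) => evalFun p (x + h • z)) :=
      (contDiff_evalFun p).comp (contDiff_const.add (contDiff_id.const_smul h))
    rw [iteratedFDeriv_apply_right _ hcd s v z0]
    have hA : ∀ z : EuclideanSpace ℝ (Fin d),
        fderiv ℝ (fun z : EuclideanSpace ℝ (Fin d) => evalFun p (x + h • z)) z (v (Fin.last s))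
          = evalFun (h • Dop (v (Fin.last s)) p) (x + h • z) := by
      intro z
      have h1 : HasFDerivAt (fun z : EuclideanSpace ℝ (Fin d) => x + h • z)
          (h • ContinuousLinearMap.id ℝ (EuclideanSpace ℝ (Fin d))) z :=
        ((hasFDerivAt_id z).const_smul h).const_add x
      have h2 : HasFDerivAt (fun z : EuclideanSpace ℝ (Fin d) => evalFun p (x + h • z))
          ((Dlin p (x + h • z)).comp (h • ContinuousLinearMap.id ℝ (EuclideanSpace ℝ (Fin d)))) z :=
        HasFDerivAt.comp (f := fun z : EuclideanSpace ℝ (Fin d) => x + h • z) z (hasFDerivAt_evalFun p (x + h • z)) h1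
      rw [h2.fderiv]
      simp only [ContinuousLinearMap.comp_apply, ContinuousLinearMap.smul_apply,
        ContinuousLinearMap.id_apply, map_smul, Dlin_apply]
      simp [evalFun, smul_eq_C_mul]
    have h3 : (fun z => fderiv ℝ
          (fun z : EuclideanSpace ℝ (Fin d) => evalFun p (x + h • z)) z (v (Fin.last s)))
        = fun z => evalFun (h • Dop (v (Fin.last s)) p) (x + h • z) := funext hA
    rw [h3, ih]
    rw [iteratedFDeriv_apply_right (evalFun p) (contDiff_evalFun p) s v (x + h • z0)]
    have h4 : (fun z => fderiv ℝ (evalFun p) z (v (Fin.last s)))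
        = evalFun (Dop (v (Fin.last s)) p) := by
      funext z; rw [fderiv_evalFun, Dlin_apply]
    rw [h4]
    rw [iteratedFDeriv_evalFun, iteratedFDeriv_evalFun, map_smul, evalFun_smul']
    ring


variable {ℓ : ℕ}

/-- The finitely supported function associated with a monomial index. -/
def monFinsupp (α : MonIdx d ℓ) : Fin d →₀ ℕ :=
  Finsupp.equivFunOnFinite.symm (fun i => (α.1 i : ℕ))

@[simp] lemma monFinsupp_apply (α : MonIdx d ℓ) (i : Fin d) :
    monFinsupp α i = α.1 i := rfl

lemma monFinsupp_injective : Function.Injective (monFinsupp (d := d) (ℓ := ℓ)) := by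
  intro α β hab
  apply Subtype.ext
  funext i
  have := congrArg (fun f => f i) hab
  simpa [monFinsupp, Fin.ext_iff] using this

/-- The polynomial `z^α / α!`. -/
def monPoly (α : MonIdx d ℓ) : MvPolynomial (Fin d) ℝ :=
  C (((∏ i, Nat.factorial (α.1 i) : ℕ) : ℝ))⁻¹ * ∏ i, X i ^ (α.1 i : ℕ)

lemma sum_monPoly (p : MvPolynomial (Fin d) ℝ) (hp : p.totalDegree ≤ ℓ) :
    ∑ α : MonIdx d ℓ,
      (((∏ i, Nat.factorial (α.1 i) : ℕ) : ℝ) * coeff (monFinsupp α) p) • monPoly α = p := by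
  classical
  have hterm : ∀ α : MonIdx d ℓ,
      (((∏ i, Nat.factorial (α.1 i) : ℕ) : ℝ) * coeff (monFinsupp α) p) • monPoly α
        = monomial (monFinsupp α) (coeff (monFinsupp α) p) := by
    intro α
    have hN : ((∏ i, Nat.factorial (α.1 i) : ℕ) : ℝ) ≠ 0 := by
      simp only [ne_eq, Nat.cast_eq_zero, Finset.prod_eq_zero_iff]
      push_neg
      exact fun i _ => Nat.factorial_ne_zero _
    rw [smul_eq_C_mul, monPoly, monomial_eq, ← mul_assoc, ← C_mul]
    have h1 : ((∏ i, Nat.factorial (α.1 i) : ℕ) : ℝ) * coeff (monFinsupp α) p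
        * ((∏ i, Nat.factorial (α.1 i) : ℕ) : ℝ)⁻¹ = coeff (monFinsupp α) p := by
      field_simp
    rw [h1]
    congr 1
    rw [Finsupp.prod_fintype _ _ (fun i => pow_zero _)]
    rfl
  simp only [hterm]
  have hsub : p.support ⊆ Finset.image (monFinsupp (d := d) (ℓ := ℓ)) Finset.univ := by
    intro m hm
    have hsum : (∑ i, m i) ≤ ℓ := by
      have h1 : m.sum (fun _ e => e) ≤ p.totalDegree := le_totalDegree hm
      have h2 : m.sum (fun _ e => e) = ∑ i, m i := Finsupp.sum_fintype _ _ (fun i => rfl)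
      omega
    have hlt : ∀ i, m i < ℓ + 1 := by
      intro i
      have : m i ≤ ∑ j, m j :=
        Finset.single_le_sum (fun j _ => Nat.zero_le _) (Finset.mem_univ i)
      omega
    refine Finset.mem_image.mpr ⟨⟨fun i => ⟨m i, hlt i⟩, ?_⟩, Finset.mem_univ _, ?_⟩
    · simpa using hsum
    · ext i; simp [monFinsupp]
  calc ∑ α : MonIdx d ℓ, monomial (monFinsupp α) (coeff (monFinsupp α) p)
      = ∑ m ∈ Finset.image (monFinsupp (d := d) (ℓ := ℓ)) Finset.univ, monomial m (coeff m p) :=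
        (Finset.sum_image
          (f := fun m => (monomial m) (coeff m p)) (g := monFinsupp) (s := Finset.univ)
          fun a _ b _ hab => monFinsupp_injective hab).symm
    _ = ∑ m ∈ p.support, monomial m (coeff m p) := by
        refine (Finset.sum_subset hsub fun m _ hm => ?_).symm
        rw [MvPolynomial.notMem_support_iff.mp hm, map_zero]
    _ = p := p.as_sum.symm

lemma aeval_eq_eval' (f : Fin d → ℝ) (p : MvPolynomial (Fin d) ℝ) :
    aeval f p = eval f p := by
  rw [aeval_def, Algebra.algebraMap_self]
  rfl


lemma evalFun_sum {ι : Type*} (t : Finset ι) (f : ι → MvPolynomial (Fin d) ℝ)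
    (y : EuclideanSpace ℝ (Fin d)) :
    evalFun (∑ a ∈ t, f a) y = ∑ a ∈ t, evalFun (f a) y := by
  simp [evalFun]

lemma dotProduct_sum' {m : Type*} [Fintype m] {ι : Type*} (t : Finset ι) (a : m → ℝ)
    (w : ι → m → ℝ) :
    dotProduct a (∑ i ∈ t, w i) = ∑ i ∈ t, dotProduct a (w i) := by
  simp only [dotProduct, Finset.sum_apply, Finset.mul_sum]
  exact Finset.sum_comm

lemma sum_mulVec' {m m' : Type*} [Fintype m'] {ι : Type*} (t : Finset ι)
    (M : ι → Matrix m m' ℝ) (w : m' → ℝ) :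
    (∑ i ∈ t, M i).mulVec w = ∑ i ∈ t, (M i).mulVec w := by
  funext β
  simp only [Matrix.mulVec, dotProduct, Matrix.sum_apply, Finset.sum_apply,
    Finset.sum_mul]
  exact Finset.sum_comm

lemma mulVec_sum' {m m' : Type*} [Fintype m'] {ι : Type*} (t : Finset ι)
    (M : Matrix m m' ℝ) (w : ι → m' → ℝ) :
    M.mulVec (∑ i ∈ t, w i) = ∑ i ∈ t, M.mulVec (w i) := by
  funext β
  simp only [Matrix.mulVec, dotProduct, Finset.sum_apply, Finset.mul_sum]
  exact Finset.sum_comm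

lemma vecMulVec_mulVec' {m m' : Type*} [Fintype m'] (a : m → ℝ) (b w : m' → ℝ) :
    (Matrix.vecMulVec a b).mulVec w = dotProduct b w • a := by
  funext β
  simp only [Matrix.mulVec, dotProduct, Matrix.vecMulVec_apply, Pi.smul_apply,
    smul_eq_mul, mul_assoc, ← Finset.mul_sum]
  ring

end Stmt14Aux


/-- Lemma `lmm:reproduction`, polynomial reproduction.
If the design matrix `B(x)` of the local polynomial estimator is positive definite
(equivalently, symmetric with positive smallest eigenvalue), then for every
polynomial `q : ℝ^d → ℝ` of degree at most `ℓ`,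
`Σᵢ wᵢ(x) q(xᵢ) = D_𝐯 q(x)`, the `s`-th directional derivative of `q` at `x` in the
unit directions `𝐯`. -/
theorem stmt14 (d ℓ n s : ℕ) (hd : 1 ≤ d) (hℓ : 1 ≤ ℓ) (hn : 1 ≤ n) (hs : s ≤ ℓ)
    (T h : ℝ) (hT : 0 < T) (hh : 0 < h)
    (v : Fin s → EuclideanSpace ℝ (Fin d)) (hv : ∀ i, ‖v i‖ = 1)
    (X : Fin n → EuclideanSpace ℝ (Fin d))
    (hX : ∀ i j, X i j ∈ Set.Icc (0 : ℝ) T)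
    (K : ℝ → ℝ) (x : EuclideanSpace ℝ (Fin d))
    (hB : (Bmat d ℓ n T h K X x).PosDef)
    (q : MvPolynomial (Fin d) ℝ) (hq : q.totalDegree ≤ ℓ) :
    ∑ i, lpWeight d ℓ n s T h K v X x i *
        MvPolynomial.eval (fun j => X i j) q =
      iteratedFDeriv ℝ s (fun y => MvPolynomial.eval (fun j => y j) q) x v := by
  classical
  have hh' : (h : ℝ) ≠ 0 := hh.ne'
  have hT' : (T : ℝ) ≠ 0 := hT.ne'
  have hnpos : (0 : ℝ) < (n : ℝ) := by exact_mod_cast hn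
  -- the shifted, rescaled polynomial `Q(z) = q(x + h z)`
  set σp : Fin d → MvPolynomial (Fin d) ℝ := fun j => MvPolynomial.C (x j) + MvPolynomial.C h * MvPolynomial.X j with hσp
  set Q : MvPolynomial (Fin d) ℝ := bind₁ σp q with hQdef
  have hσdeg : ∀ j, (σp j).totalDegree ≤ 1 := by
    intro j
    refine (totalDegree_add _ _).trans (max_le ?_ ?_)
    · simp [totalDegree_C]
    · refine (totalDegree_mul _ _).trans ?_
      simp [totalDegree_C, totalDegree_X]
  have hQdeg : Q.totalDegree ≤ ℓ := by
    rw [hQdef, q.as_sum, map_sum]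
    refine totalDegree_finsetSum_le fun m hm => ?_
    rw [bind₁_monomial]
    refine (totalDegree_mul _ _).trans ?_
    rw [totalDegree_C, zero_add]
    refine (totalDegree_finset_prod _ _).trans ?_
    refine le_trans (Finset.sum_le_sum fun i _ => (totalDegree_pow _ _).trans
      (Nat.mul_le_mul_left _ (hσdeg i))) ?_
    simp only [mul_one]
    exact le_trans (le_totalDegree hm) hq
  have hQeval : ∀ z : EuclideanSpace ℝ (Fin d), evalFun Q z = evalFun q (x + h • z) := by
    intro z
    rw [evalFun, evalFun, hQdef, ← aeval_eq_eval', aeval_bind₁, aeval_eq_eval']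
    have hpt : (fun i => aeval (fun j => z j) (σp i)) = fun j => (x + h • z) j := by
      funext j
      simp [hσp, PiLp.add_apply, PiLp.smul_apply, smul_eq_mul, Algebra.algebraMap_self]
    rw [hpt]
  -- Taylor coefficients
  set c : MonIdx d ℓ → ℝ := fun α =>
    ((∏ i, Nat.factorial (α.1 i) : ℕ) : ℝ) * MvPolynomial.coeff (monFinsupp α) Q with hcdef
  have hsum : ∑ α : MonIdx d ℓ, c α • monPoly α = Q := sum_monPoly Q hQdeg
  have hpsi : ∀ (z : EuclideanSpace ℝ (Fin d)) (α : MonIdx d ℓ),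
      psiVec d ℓ z α = evalFun (monPoly α) z := by
    intro z α
    simp [psiVec, monPoly, evalFun]
  have hdotc : ∀ z : EuclideanSpace ℝ (Fin d),
      dotProduct (psiVec d ℓ z) c = evalFun Q z := by
    intro z
    rw [← hsum, evalFun_sum, dotProduct]
    refine Finset.sum_congr rfl fun α _ => ?_
    rw [evalFun_smul', hpsi]
    ring
  have hTaylor : ∀ i : Fin n, MvPolynomial.eval (fun j => X i j) q
      = dotProduct (psiVec d ℓ (h⁻¹ • (X i - x))) c := by
    intro i
    rw [hdotc, hQeval]
    have hxz : x + h • (h⁻¹ • (X i - x)) = X i := by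
      rw [smul_smul, mul_inv_cancel₀ hh', one_smul]
      abel
    rw [hxz]
    rfl
  -- the derivative vector
  have hD : ∀ α : MonIdx d ℓ, DpsiVec d ℓ s v α = evalFun (DopIter s v (monPoly α)) 0 := by
    intro α
    rw [DpsiVec]
    rw [show (fun z => psiVec d ℓ z α) = evalFun (monPoly α) from funext fun z => hpsi z α]
    exact iteratedFDeriv_evalFun s v (monPoly α) 0
  have hdotD : dotProduct (DpsiVec d ℓ s v) c
      = h ^ s * iteratedFDeriv ℝ s (fun y => MvPolynomial.eval (fun j => y j) q) x v := by
    have e1 : dotProduct (DpsiVec d ℓ s v) c = evalFun (DopIter s v Q) 0 := by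
      rw [← hsum, map_sum, dotProduct, evalFun_sum]
      refine Finset.sum_congr rfl fun α _ => ?_
      rw [hD α, map_smul, evalFun_smul']
      ring
    rw [e1, ← iteratedFDeriv_evalFun]
    rw [show evalFun Q = fun z => evalFun q (x + h • z) from funext hQeval]
    rw [iteratedFDeriv_evalFun_affine, smul_zero, add_zero]
    rfl
  -- matrix algebra
  have hBdet : IsUnit (Bmat d ℓ n T h K X x).det :=
    (Matrix.isUnit_iff_isUnit_det _).mp hB.isUnit
  set S : MonIdx d ℓ → ℝ :=
    ∑ i, (K (‖X i - x‖ / h) * dotProduct (psiVec d ℓ (h⁻¹ • (X i - x))) c) •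
      psiVec d ℓ (h⁻¹ • (X i - x)) with hSdef
  have hBmulc : (Bmat d ℓ n T h K X x).mulVec c = (T ^ d / (n * h ^ d)) • S := by
    rw [Bmat, Matrix.smul_mulVec, sum_mulVec', hSdef]
    congr 1
    refine Finset.sum_congr rfl fun i _ => ?_
    rw [Matrix.smul_mulVec, vecMulVec_mulVec', smul_smul]
  have hc' : (Bmat d ℓ n T h K X x)⁻¹.mulVec ((Bmat d ℓ n T h K X x).mulVec c) = c := by
    rw [Matrix.mulVec_mulVec, Matrix.nonsing_inv_mul _ hBdet, Matrix.one_mulVec]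
  have hc_eq : c = (T ^ d / (n * h ^ d)) • (Bmat d ℓ n T h K X x)⁻¹.mulVec S := by
    rw [← hc', hBmulc, Matrix.mulVec_smul]
  have hw : ∀ i : Fin n, lpWeight d ℓ n s T h K v X x i * MvPolynomial.eval (fun j => X i j) q
      = (T ^ d / (n * h ^ (d + s))) *
        ((K (‖X i - x‖ / h) * dotProduct (psiVec d ℓ (h⁻¹ • (X i - x))) c) *
          dotProduct (DpsiVec d ℓ s v)
            ((Bmat d ℓ n T h K X x)⁻¹.mulVec (psiVec d ℓ (h⁻¹ • (X i - x))))) := by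
    intro i
    rw [hTaylor i]
    simp only [lpWeight]
    ring
  have hexp : dotProduct (DpsiVec d ℓ s v) ((Bmat d ℓ n T h K X x)⁻¹.mulVec S)
      = ∑ i, (K (‖X i - x‖ / h) * dotProduct (psiVec d ℓ (h⁻¹ • (X i - x))) c) *
          dotProduct (DpsiVec d ℓ s v)
            ((Bmat d ℓ n T h K X x)⁻¹.mulVec (psiVec d ℓ (h⁻¹ • (X i - x)))) := by
    rw [hSdef, mulVec_sum', dotProduct_sum']
    refine Finset.sum_congr rfl fun i _ => ?_
    rw [Matrix.mulVec_smul, dotProduct_smul, smul_eq_mul]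
  have ha0 : (T ^ d / (n * h ^ d) : ℝ) ≠ 0 :=
    ne_of_gt (div_pos (pow_pos hT d) (mul_pos hnpos (pow_pos hh d)))
  have h9 : dotProduct (DpsiVec d ℓ s v) c
      = (T ^ d / (n * h ^ d)) *
        dotProduct (DpsiVec d ℓ s v) ((Bmat d ℓ n T h K X x)⁻¹.mulVec S) := by
    conv_lhs => rw [hc_eq]
    rw [dotProduct_smul, smul_eq_mul]
  calc ∑ i, lpWeight d ℓ n s T h K v X x i * MvPolynomial.eval (fun j => X i j) q
      = ∑ i, (T ^ d / (n * h ^ (d + s))) *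
          ((K (‖X i - x‖ / h) * dotProduct (psiVec d ℓ (h⁻¹ • (X i - x))) c) *
            dotProduct (DpsiVec d ℓ s v)
              ((Bmat d ℓ n T h K X x)⁻¹.mulVec (psiVec d ℓ (h⁻¹ • (X i - x))))) :=
        Finset.sum_congr rfl fun i _ => hw i
    _ = (T ^ d / (n * h ^ (d + s))) *
        dotProduct (DpsiVec d ℓ s v) ((Bmat d ℓ n T h K X x)⁻¹.mulVec S) := by
        rw [← Finset.mul_sum, hexp]
    _ = iteratedFDeriv ℝ s (fun y => MvPolynomial.eval (fun j => y j) q) x v := by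
        have h10 : dotProduct (DpsiVec d ℓ s v) ((Bmat d ℓ n T h K X x)⁻¹.mulVec S)
            = (T ^ d / (n * h ^ d))⁻¹ * dotProduct (DpsiVec d ℓ s v) c := by
          rw [h9, ← mul_assoc, inv_mul_cancel₀ ha0, one_mul]
        rw [h10, hdotD, pow_add]
        field_simp
end
end

section
/- Let d ∈ ℕ, L₁ > 0, T > 0, δ ≥ 0. Let f⋆ : ℝ^d → ℝ^d be L₁-Lipschitz, x₁ ∈ ℝ^d, and set u⋆ := U(f⋆, x₁, ·), so u̇⋆(t) = f⋆(u⋆(t)). Let û, û̇ : [0,T] → ℝ^d be any continuous functions, and for x ∈ ℝ^d let t_NN(û, T, x) be a minimizer over t ∈ [0,T] of ‖û(t) − x‖, and define f̂(x) := û̇(t_NN(û, T, x)). Then for every x₀ with dist(x₀, u⋆([0,T])) ≤ δ: ‖f̂(x₀) − f⋆(x₀)‖ ≤ L₁·( δ + 2·sup_{t∈[0,T]} ‖û(t) − u⋆(t)‖ ) + sup_{t∈[0,T]} ‖û̇(t) − u̇⋆(t)‖. -/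
/-- Lemma `lmm:nnbound`, nearest-neighbor error bound.
Let `f⋆ : ℝ^d → ℝ^d` be `L₁`-Lipschitz, let `u⋆` solve `u̇⋆ = f⋆(u⋆)` with
`u⋆ 0 = x₁`, let `û`, `û̇` be continuous (on `[0,T]`) functions, let
`t_NN(û, T, x)` be a minimizer over `[0,T]` of `t ↦ ‖û(t) − x‖`, and set
`f̂(x) := û̇(t_NN(û, T, x))`.  Then for every `x₀` with
`dist(x₀, u⋆([0,T])) ≤ δ`:
`‖f̂(x₀) − f⋆(x₀)‖ ≤ L₁·(δ + 2·sup_{t∈[0,T]} ‖û(t) − u⋆(t)‖)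
+ sup_{t∈[0,T]} ‖û̇(t) − u̇⋆(t)‖`  (note `u̇⋆(t) = f⋆(u⋆(t))`). -/
theorem stmt17 (d : ℕ) (L₁ T δ : ℝ) (hL₁ : 0 < L₁) (hT : 0 < T) (hδ : 0 ≤ δ)
    (fstar : EuclideanSpace ℝ (Fin d) → EuclideanSpace ℝ (Fin d))
    (hf : ∀ a b, ‖fstar a - fstar b‖ ≤ L₁ * ‖a - b‖)
    (x₁ : EuclideanSpace ℝ (Fin d)) (ustar : ℝ → EuclideanSpace ℝ (Fin d))
    (hu0 : ustar 0 = x₁)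
    (hu : ∀ t, HasDerivAt ustar (fstar (ustar t)) t)
    (uhat udot : ℝ → EuclideanSpace ℝ (Fin d))
    (huc : ContinuousOn uhat (Set.Icc 0 T))
    (hudc : ContinuousOn udot (Set.Icc 0 T))
    (τ : EuclideanSpace ℝ (Fin d) → ℝ)
    (hτmem : ∀ x, τ x ∈ Set.Icc (0 : ℝ) T)
    (hτmin : ∀ x, ∀ t ∈ Set.Icc (0 : ℝ) T, ‖uhat (τ x) - x‖ ≤ ‖uhat t - x‖)
    (x₀ : EuclideanSpace ℝ (Fin d))
    (hx₀ : Metric.infDist x₀ (ustar '' Set.Icc 0 T) ≤ δ) :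
    ‖udot (τ x₀) - fstar x₀‖ ≤
      L₁ * (δ + 2 * ⨆ t : Set.Icc (0 : ℝ) T, ‖uhat ↑t - ustar ↑t‖) +
        ⨆ t : Set.Icc (0 : ℝ) T, ‖udot ↑t - fstar (ustar ↑t)‖ := by
  set Eu := ⨆ t : Set.Icc (0 : ℝ) T, ‖uhat ↑t - ustar ↑t‖ with hEuDef
  set Ed := ⨆ t : Set.Icc (0 : ℝ) T, ‖udot ↑t - fstar (ustar ↑t)‖ with hEdDef
  have hust : Continuous ustar :=
    continuous_iff_continuousAt.mpr fun t => (hu t).continuousAt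
  have hs := hτmem x₀
  -- bounded above: Eu
  have hcomp : CompactSpace (Set.Icc (0:ℝ) T) := isCompact_iff_compactSpace.mp (isCompact_Icc : IsCompact (Set.Icc (0:ℝ) T))
  have hEu_bdd : BddAbove (Set.range fun t : Set.Icc (0:ℝ) T => ‖uhat ↑t - ustar ↑t‖) := by
    have hc : Continuous fun t : Set.Icc (0:ℝ) T => ‖uhat ↑t - ustar ↑t‖ := by
      exact (huc.restrict.sub (hust.comp continuous_subtype_val)).norm
    exact (isCompact_range hc).bddAbove
  have hEd_bdd : BddAbove (Set.range fun t : Set.Icc (0:ℝ) T => ‖udot ↑t - fstar (ustar ↑t)‖) := by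
    have hfc : Continuous fstar :=
      (LipschitzWith.of_dist_le_mul (K := ⟨L₁, hL₁.le⟩) (fun a b => by
        simp only [dist_eq_norm]; exact hf a b)).continuous
    have hc : Continuous fun t : Set.Icc (0:ℝ) T => ‖udot ↑t - fstar (ustar ↑t)‖ := by
      exact (hudc.restrict.sub ((hfc.comp hust).comp continuous_subtype_val)).norm
    exact (isCompact_range hc).bddAbove
  have hEu_le : ∀ t ∈ Set.Icc (0:ℝ) T, ‖uhat t - ustar t‖ ≤ Eu := by
    intro t ht
    exact le_ciSup hEu_bdd (⟨t, ht⟩ : Set.Icc (0:ℝ) T)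
  have hEd_le : ‖udot (τ x₀) - fstar (ustar (τ x₀))‖ ≤ Ed :=
    le_ciSup hEd_bdd (⟨τ x₀, hs⟩ : Set.Icc (0:ℝ) T)
  -- find nearest point on trajectory
  obtain ⟨y, hy, hdy⟩ := (isCompact_Icc.image hust).exists_infDist_eq_dist
    (Set.Nonempty.image _ ⟨0, le_refl 0, hT.le⟩) x₀
  obtain ⟨t₁, ht₁, rfl⟩ := hy
  have hdist : ‖x₀ - ustar t₁‖ ≤ δ := by
    rw [← dist_eq_norm, ← hdy]; exact hx₀
  -- key geometric bound
  have hkey : ‖ustar (τ x₀) - x₀‖ ≤ δ + 2 * Eu := by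
    have h1 : ‖ustar (τ x₀) - x₀‖ ≤ ‖ustar (τ x₀) - uhat (τ x₀)‖ + ‖uhat (τ x₀) - x₀‖ :=
      norm_sub_le_norm_sub_add_norm_sub _ _ _
    have h2 : ‖uhat (τ x₀) - x₀‖ ≤ ‖uhat t₁ - x₀‖ := hτmin x₀ t₁ ht₁
    have h3 : ‖uhat t₁ - x₀‖ ≤ ‖uhat t₁ - ustar t₁‖ + ‖ustar t₁ - x₀‖ :=
      norm_sub_le_norm_sub_add_norm_sub _ _ _
    have h4 : ‖ustar (τ x₀) - uhat (τ x₀)‖ = ‖uhat (τ x₀) - ustar (τ x₀)‖ := norm_sub_rev _ _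
    have h5 : ‖ustar t₁ - x₀‖ = ‖x₀ - ustar t₁‖ := norm_sub_rev _ _
    have hb1 := hEu_le (τ x₀) hs
    have hb2 := hEu_le t₁ ht₁
    linarith
  calc ‖udot (τ x₀) - fstar x₀‖
      ≤ ‖udot (τ x₀) - fstar (ustar (τ x₀))‖ + ‖fstar (ustar (τ x₀)) - fstar x₀‖ :=
        norm_sub_le_norm_sub_add_norm_sub _ _ _
    _ ≤ Ed + L₁ * ‖ustar (τ x₀) - x₀‖ := add_le_add hEd_le (hf _ _)
    _ ≤ Ed + L₁ * (δ + 2 * Eu) := by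
        have := mul_le_mul_of_nonneg_left hkey hL₁.le; linarith
    _ = L₁ * (δ + 2 * Eu) + Ed := by ring
end
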